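/- arXiv:1605.08013 — 4 statements merged into one kernel-verified Lean document; each statement's English description precedes it below -/
import Mathlib

section
/- For every δ > 0 there exists n₀ such that for every graph G on n > n₀ vertices, the number of 3-edge-colorings of G containing no rainbow triangle satisfies c_{3,F̂₃}(G) ≤ 2^{(1+δ)·n²/2}. -/
open SimpleGraph

/-- A (not necessarily proper) `r`-edge-coloring of a graph `G`, encoded as a symmetric
function on ordered pairs of vertices whose value on non-adjacent pairs is pinned to `0`. -/
def IsEdgeColoring {V : Type*} {r : ℕ} (G : SimpleGraph V) (c : V → V → Fin r) : Prop :=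
  (∀ u v, c u v = c v u) ∧ ∀ u v, ¬ G.Adj u v → (c u v).1 = 0

/-- The coloring `c` of `G` contains a copy of the pattern `p` of the complete graph `K_k`
with all vertices inside the set `A`: there is an injective map `f` of `Fin k` into `A`
whose image is a clique of `G` and such that two edges of the copy get equal colors
exactly when the corresponding edges of `K_k` lie in the same class of the pattern. -/
def ContainsPatternOn {V : Type*} {k r s : ℕ} (G : SimpleGraph V) (A : Set V)
    (p : Fin k → Fin k → Fin s) (c : V → V → Fin r) : Prop :=
  ∃ f : Fin k → V, (∀ i, f i ∈ A) ∧ Function.Injective f ∧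
    (∀ i j, i ≠ j → G.Adj (f i) (f j)) ∧
    ∀ i j i' j', i ≠ j → i' ≠ j' →
      (c (f i) (f j) = c (f i') (f j') ↔ p i j = p i' j')

/-- The coloring `c` of `G` contains a copy of the pattern `p`. -/
def ContainsPattern {V : Type*} {k r s : ℕ} (G : SimpleGraph V)
    (p : Fin k → Fin k → Fin s) (c : V → V → Fin r) : Prop :=
  ContainsPatternOn G Set.univ p c

/-- `c_{r,p}(G)`: the number of `p`-free `r`-edge-colorings of `G`. -/
noncomputable def colCount {V : Type*} {k s : ℕ} (r : ℕ) (p : Fin k → Fin k → Fin s)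
    (G : SimpleGraph V) : ℕ :=
  Nat.card {c : V → V → Fin r // IsEdgeColoring G c ∧ ¬ ContainsPattern G p c}

/-- The rainbow pattern `F̂₃` of `K_3`: every edge is in its own class (for distinct `i, j`,
the values `0+1`, `0+2`, `1+2` in `Fin 3` are pairwise distinct). -/
def rainbowPat : Fin 3 → Fin 3 → Fin 3 := fun i j => i + j

open scoped Classical

namespace Statement11Aux

open Finset

variable {n : ℕ}

/-- validity of a partial rainbow-free coloring supported on `S`. -/
def OKc (G : SimpleGraph (Fin n)) (S : Finset (Fin n)) (c : Fin n → Fin n → Fin 3) : Prop :=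
  (∀ u v, c u v = c v u) ∧
  (∀ u v, ¬(u ∈ S ∧ v ∈ S ∧ G.Adj u v) → c u v = 0) ∧
  (∀ u v x, u ∈ S → v ∈ S → x ∈ S → G.Adj u v → G.Adj u x → G.Adj v x →
      (c u v = c u x ∨ c u v = c v x ∨ c u x = c v x))

noncomputable def NVC (G : SimpleGraph (Fin n)) (S : Finset (Fin n)) : ℕ :=
  Nat.card {c : Fin n → Fin n → Fin 3 // OKc G S c}

lemma OKc_zero (G : SimpleGraph (Fin n)) (S : Finset (Fin n)) :
    OKc G S (fun _ _ => (0 : Fin 3)) :=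
  ⟨fun _ _ => rfl, fun _ _ _ => rfl, fun _ _ _ _ _ _ _ _ _ => Or.inl rfl⟩

lemma NVC_empty (G : SimpleGraph (Fin n)) : NVC G (∅ : Finset (Fin n)) = 1 := by
  rw [NVC, Nat.card_eq_one_iff_unique]
  constructor
  · constructor
    intro c c'
    apply Subtype.ext
    funext u v
    have h1 := c.2.2.1 u v (by simp)
    have h2 := c'.2.2.1 u v (by simp)
    rw [h1, h2]
  · exact ⟨⟨_, OKc_zero G ∅⟩⟩

/-- the back-neighborhood of `w` inside `S`. -/
noncomputable def NbrS (G : SimpleGraph (Fin n)) (S : Finset (Fin n)) (w : Fin n) : Finset (Fin n) :=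
  (S.erase w).filter (fun u => G.Adj w u)

lemma mem_NbrS {G : SimpleGraph (Fin n)} {S : Finset (Fin n)} {w u : Fin n} :
    u ∈ NbrS G S w ↔ u ≠ w ∧ u ∈ S ∧ G.Adj w u := by
  simp [NbrS, Finset.mem_filter, Finset.mem_erase, and_assoc]

lemma cw_zero {G : SimpleGraph (Fin n)} {S : Finset (Fin n)} {w : Fin n} {c}
    (hc : OKc G S c) {u : Fin n} (hu : u ∉ NbrS G S w) : c w u = 0 := by
  by_cases huw : u = w
  · subst huw
    exact hc.2.1 u u (by simp)
  · apply hc.2.1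
    rintro ⟨-, huS, hadj⟩
    exact hu (mem_NbrS.2 ⟨huw, huS, hadj⟩)

def resC (w : Fin n) (c : Fin n → Fin n → Fin 3) : Fin n → Fin n → Fin 3 :=
  fun u v => if u = w ∨ v = w then 0 else c u v

lemma resC_apply {w u v : Fin n} {c} (hu : u ≠ w) (hv : v ≠ w) :
    resC w c u v = c u v := by
  simp [resC, hu, hv]

lemma resC_OK {G : SimpleGraph (Fin n)} {S : Finset (Fin n)} {w : Fin n} {c}
    (hc : OKc G S c) : OKc G (S.erase w) (resC w c) := by
  obtain ⟨hsym, hpin, hrb⟩ := hc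
  refine ⟨?_, ?_, ?_⟩
  · intro u v
    by_cases hu : u = w <;> by_cases hv : v = w <;> simp [resC, hu, hv, hsym u v]
  · intro u v h
    by_cases hu : u = w
    · simp [resC, hu]
    by_cases hv : v = w
    · simp [resC, hv]
    rw [resC_apply hu hv]
    apply hpin
    rintro ⟨huS, hvS, hadj⟩
    exact h ⟨Finset.mem_erase.2 ⟨hu, huS⟩, Finset.mem_erase.2 ⟨hv, hvS⟩, hadj⟩
  · intro u v x hu hv hx h1 h2 h3
    have hu' := Finset.mem_erase.1 hu
    have hv' := Finset.mem_erase.1 hv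
    have hx' := Finset.mem_erase.1 hx
    rw [resC_apply hu'.1 hv'.1, resC_apply hu'.1 hx'.1, resC_apply hv'.1 hx'.1]
    exact hrb u v x hu'.2 hv'.2 hx'.2 h1 h2 h3



lemma card_le_sparse {G : SimpleGraph (Fin n)} {S : Finset (Fin n)} {w : Fin n} :
    NVC G S ≤ NVC G (S.erase w) * 3 ^ (NbrS G S w).card := by
  classical
  set N := NbrS G S w with hN
  have key : Nat.card {c : Fin n → Fin n → Fin 3 // OKc G S c} ≤
      Nat.card ({c : Fin n → Fin n → Fin 3 // OKc G (S.erase w) c} × (↥N → Fin 3)) := by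
    apply Nat.card_le_card_of_injective
      (f := fun c => (⟨resC w c.1, resC_OK c.2⟩, fun u => c.1 w u.1))
    intro c c' h
    rw [Prod.mk.injEq, Subtype.mk.injEq] at h
    obtain ⟨h1, h2⟩ := h
    have h1' : ∀ u v : Fin n, u ≠ w → v ≠ w → c.1 u v = c'.1 u v := by
      intro u v hu hv
      have := congrFun (congrFun h1 u) v
      rwa [resC_apply hu hv, resC_apply hu hv] at this
    have hw : ∀ v : Fin n, c.1 w v = c'.1 w v := by
      intro v
      by_cases hvN : v ∈ N
      · exact congrFun h2 ⟨v, hvN⟩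
      · rw [cw_zero c.2 hvN, cw_zero c'.2 hvN]
    apply Subtype.ext
    funext u v
    by_cases hu : u = w
    · rw [hu]; exact hw v
    by_cases hv : v = w
    · rw [hv, c.2.1 u w, c'.2.1 u w]
      exact hw u
    · exact h1' u v hu hv
  have hcard : Nat.card ({c : Fin n → Fin n → Fin 3 // OKc G (S.erase w) c} × (↥N → Fin 3))
      = NVC G (S.erase w) * 3 ^ N.card := by
    rw [Nat.card_prod, Nat.card_fun, Nat.card_eq_finsetCard]
    have : Nat.card (Fin 3) = 3 := by simp [Nat.card_eq_fintype_card]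
    rw [this]
    rfl
  rw [NVC, ← hcard]
  exact key



section Dense

variable (G : SimpleGraph (Fin n)) (S : Finset (Fin n)) (w : Fin n)

def RR (c : Fin n → Fin n → Fin 3) (u v : Fin n) : Prop :=
  u ∈ NbrS G S w ∧ v ∈ NbrS G S w ∧ c w u ≠ 2 ∧ c w v ≠ 2 ∧ G.Adj u v ∧ c u v = 2

def Reach (c : Fin n → Fin n → Fin 3) : Fin n → Fin n → Prop :=
  Relation.ReflTransGen (RR G S w c)

noncomputable def Fset (c : Fin n → Fin n → Fin 3) : Finset (Fin n) :=
  (NbrS G S w).filter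
    (fun u => c w u ≠ 2 ∧ ∀ v ∈ NbrS G S w, G.Adj u v → c w v = 2 → c u v = 2)

noncomputable def Xset (c : Fin n → Fin n → Fin 3) : Finset (Fin n) :=
  (NbrS G S w).filter (fun u => c w u = 0 ∧ ∀ v, Reach G S w c u v → v ∈ Fset G S w c)

noncomputable def Bset (c : Fin n → Fin n → Fin 3) : Finset (Fin n) :=
  (NbrS G S w).filter
    (fun v => v ∉ Xset G S w c ∧ ∃ x ∈ Xset G S w c, G.Adj v x ∧ c v x = 2)

noncomputable def Yset (c : Fin n → Fin n → Fin 3) : Finset (Fin n) :=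
  ((NbrS G S w).filter (fun u => c w u = 2)) \ Bset G S w c

variable {G S w}
variable {c : Fin n → Fin n → Fin 3} (hwS : w ∈ S) (hc : OKc G S c)

include hwS hc in
lemma RR_cw {u v : Fin n} (h : RR G S w c u v) : c w u = c w v := by
  obtain ⟨hu, hv, h2u, h2v, hadj, h2⟩ := h
  obtain ⟨huw, huS, hadjwu⟩ := mem_NbrS.1 hu
  obtain ⟨hvw, hvS, hadjwv⟩ := mem_NbrS.1 hv
  rcases hc.2.2 w u v hwS huS hvS hadjwu hadjwv hadj with h'|h'|h'
  · exact h'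
  · rw [h2] at h'; exact absurd h' h2u
  · rw [h2] at h'; exact absurd h' h2v

include hwS hc in
lemma Reach_cw {u v : Fin n} (h : Reach G S w c u v) : c w u = c w v := by
  induction h with
  | refl => rfl
  | tail _ hstep ih => exact ih.trans (RR_cw hwS hc hstep)

lemma Reach_mem {u v : Fin n} (h : Reach G S w c u v) (hu : u ∈ NbrS G S w) :
    v ∈ NbrS G S w := by
  induction h with
  | refl => exact hu
  | tail _ hstep _ => exact hstep.2.1

include hwS hc in
lemma forcedK2 {u v : Fin n} (hu : u ∈ NbrS G S w) (h2u : c w u ≠ 2)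
    (hv : v ∈ NbrS G S w) (hadj : G.Adj u v) (h2v : c w v = 2) (hne : c u v ≠ 2) :
    c w u = c u v := by
  obtain ⟨huw, huS, hadjwu⟩ := mem_NbrS.1 hu
  obtain ⟨hvw, hvS, hadjwv⟩ := mem_NbrS.1 hv
  rcases hc.2.2 w u v hwS huS hvS hadjwu hadjwv hadj with h'|h'|h'
  · rw [h'] at h2u; exact absurd h2v h2u
  · exact h'
  · rw [h2v] at h'; exact absurd h'.symm hne

include hwS hc in
lemma Bset_cw {v : Fin n} (hv : v ∈ Bset G S w c) : c w v = 2 := by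
  obtain ⟨hvN, hvX, x, hxX, hadj, h2⟩ := Finset.mem_filter.1 hv
  by_contra h2v
  obtain ⟨hxN, hx0, hxR⟩ := Finset.mem_filter.1 hxX
  have hstep : RR G S w c x v :=
    ⟨hxN, hvN, by rw [hx0]; decide, h2v, hadj.symm, by rw [hc.1 x v]; exact h2⟩
  have hreach : Reach G S w c x v := Relation.ReflTransGen.single hstep
  apply hvX
  refine Finset.mem_filter.2 ⟨hvN, ?_, ?_⟩
  · rw [← Reach_cw hwS hc hreach]; exact hx0
  · intro z hz
    exact hxR z (hreach.trans hz)

include hwS hc in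
lemma crossfreeXY {x y : Fin n} (hx : x ∈ Xset G S w c) (hy : y ∈ Yset G S w c) :
    ¬ G.Adj x y ∧ x ≠ y := by
  obtain ⟨hy2, hyB⟩ := Finset.mem_sdiff.1 hy
  obtain ⟨hyN, hy2'⟩ := Finset.mem_filter.1 hy2
  obtain ⟨hxN, hx0, hxR⟩ := Finset.mem_filter.1 hx
  have hxF : x ∈ Fset G S w c := hxR x Relation.ReflTransGen.refl
  constructor
  · intro hadj
    obtain ⟨hxN', hxF'⟩ := Finset.mem_filter.1 hxF
    have h2 : c x y = 2 := hxF'.2 y hyN hadj hy2'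
    apply hyB
    refine Finset.mem_filter.2 ⟨hyN, ?_, x, hx, hadj.symm, by rw [hc.1 y x]; exact h2⟩
    intro hyX
    have := (Finset.mem_filter.1 hyX).2.1
    rw [hy2'] at this
    exact absurd this (by decide)
  · intro h
    rw [h, hy2'] at hx0
    exact absurd hx0 (by decide)


lemma fin3_cases : ∀ a : Fin 3, a = 0 ∨ a = 1 ∨ a = 2 := by decide

include hwS in
lemma dense_inj {c c' : Fin n → Fin n → Fin 3} (hc : OKc G S c) (hc' : OKc G S c')
    (hres : resC w c = resC w c') (hX : Xset G S w c = Xset G S w c')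
    (hY : Yset G S w c = Yset G S w c') : c = c' := by
  have hcc' : ∀ u v : Fin n, u ≠ w → v ≠ w → c u v = c' u v := by
    intro u v hu hv
    have := congrFun (congrFun hres u) v
    rwa [resC_apply hu hv, resC_apply hu hv] at this
  have hNne : ∀ u ∈ NbrS G S w, u ≠ w := fun u hu => (mem_NbrS.1 hu).1
  have hNN : ∀ u v : Fin n, u ∈ NbrS G S w → v ∈ NbrS G S w → c u v = c' u v :=
    fun u v hu hv => hcc' u v (hNne u hu) (hNne v hv)
  have hB : Bset G S w c = Bset G S w c' := by
    apply Finset.filter_congr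
    intro v hvN
    rw [hX]
    constructor
    · rintro ⟨h1, x, hx, hadj, h2⟩
      exact ⟨h1, x, hx, hadj, by rw [← hNN v x hvN ((Finset.mem_filter.1 (hX ▸ hx)).1)]; exact h2⟩
    · rintro ⟨h1, x, hx, hadj, h2⟩
      exact ⟨h1, x, hx, hadj, by rw [hNN v x hvN ((Finset.mem_filter.1 (hX ▸ hx)).1)]; exact h2⟩
  have hU2 : ∀ u ∈ NbrS G S w, (c w u = 2 ↔ c' w u = 2) := by
    intro u huN
    have key : ∀ (d : Fin n → Fin n → Fin 3), OKc G S d → Xset G S w d = Xset G S w c →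
        Yset G S w d = Yset G S w c → Bset G S w d = Bset G S w c →
        (d w u = 2 ↔ (u ∈ Bset G S w c ∨ u ∈ Yset G S w c)) := by
      intro d hd hXd hYd hBd
      constructor
      · intro h2
        by_cases hB' : u ∈ Bset G S w c
        · exact Or.inl hB'
        · refine Or.inr ?_
          rw [← hYd]
          refine Finset.mem_sdiff.2 ⟨Finset.mem_filter.2 ⟨huN, h2⟩, ?_⟩
          rw [hBd]; exact hB'
      · rintro (hB' | hY')
        · rw [← hBd] at hB'; exact Bset_cw hwS hd hB'
        · rw [← hYd] at hY'
          exact (Finset.mem_filter.1 (Finset.mem_sdiff.1 hY').1).2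
    have k1 := key c hc rfl rfl rfl
    have k2 := key c' hc' hX.symm hY.symm hB.symm
    rw [k1, k2]
  have hRReq : RR G S w c = RR G S w c' := by
    funext u v
    apply propext
    constructor
    · rintro ⟨h1, h2, h3, h4, h5, h6⟩
      exact ⟨h1, h2, fun h => h3 ((hU2 u h1).2 h), fun h => h4 ((hU2 v h2).2 h), h5,
        by rw [← hNN u v h1 h2]; exact h6⟩
    · rintro ⟨h1, h2, h3, h4, h5, h6⟩
      exact ⟨h1, h2, fun h => h3 ((hU2 u h1).1 h), fun h => h4 ((hU2 v h2).1 h), h5,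
        by rw [hNN u v h1 h2]; exact h6⟩
  have hReq : Reach G S w c = Reach G S w c' := by
    unfold Reach; rw [hRReq]
  have hF : Fset G S w c = Fset G S w c' := by
    apply Finset.filter_congr
    intro u huN
    constructor
    · rintro ⟨h1, h2⟩
      refine ⟨fun h => h1 ((hU2 u huN).2 h), fun v hv hadj hv2 => ?_⟩
      rw [← hNN u v huN hv]
      exact h2 v hv hadj ((hU2 v hv).2 hv2)
    · rintro ⟨h1, h2⟩
      refine ⟨fun h => h1 ((hU2 u huN).1 h), fun v hv hadj hv2 => ?_⟩
      rw [hNN u v huN hv]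
      exact h2 v hv hadj ((hU2 v hv).1 hv2)
  have hw : ∀ u : Fin n, c w u = c' w u := by
    intro u
    by_cases huN : u ∈ NbrS G S w
    swap
    · rw [cw_zero hc huN, cw_zero hc' huN]
    by_cases h2 : c w u = 2
    · rw [h2, ((hU2 u huN).1 h2)]
    have h2' : c' w u ≠ 2 := fun h => h2 ((hU2 u huN).2 h)
    by_cases hall : ∀ z, Reach G S w c u z → z ∈ Fset G S w c
    · have hxc : u ∈ Xset G S w c ↔ c w u = 0 :=
        ⟨fun h => (Finset.mem_filter.1 h).2.1,
         fun h0 => Finset.mem_filter.2 ⟨huN, h0, hall⟩⟩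
      have hall' : ∀ z, Reach G S w c' u z → z ∈ Fset G S w c' := by
        intro z hz
        rw [← hF]
        exact hall z (by rwa [hReq])
      have hxc' : u ∈ Xset G S w c' ↔ c' w u = 0 :=
        ⟨fun h => (Finset.mem_filter.1 h).2.1,
         fun h0 => Finset.mem_filter.2 ⟨huN, h0, hall'⟩⟩
      by_cases h0 : c w u = 0
      · rw [h0, (hxc'.1 (hX ▸ hxc.2 h0)).symm]
      · have h0' : c' w u ≠ 0 := fun h => h0 (hxc.1 (hX.symm ▸ hxc'.2 h))
        rcases fin3_cases (c w u) with h|h|h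
        · exact absurd h h0
        · rcases fin3_cases (c' w u) with h'|h'|h'
          · exact absurd h' h0'
          · rw [h, h']
          · exact absurd h' h2'
        · exact absurd h h2
    · push_neg at hall
      obtain ⟨z, hz, hzF⟩ := hall
      have hzN : z ∈ NbrS G S w := Reach_mem hz huN
      have hcwz : c w u = c w z := Reach_cw hwS hc hz
      have hz2 : c w z ≠ 2 := by rw [← hcwz]; exact h2
      have hEx : ∃ v ∈ NbrS G S w, G.Adj z v ∧ c w v = 2 ∧ c z v ≠ 2 := by
        by_contra hcon
        push_neg at hcon
        apply hzF
        refine Finset.mem_filter.2 ⟨hzN, hz2, ?_⟩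
        intro v hv hadj hv2
        by_contra hne
        exact hne (hcon v hv hadj hv2)
      obtain ⟨v, hvN, hadj, hv2, hvne⟩ := hEx
      have e1 : c w z = c z v := forcedK2 hwS hc hzN hz2 hvN hadj hv2 hvne
      have e2 : c' w z = c' z v := by
        refine forcedK2 hwS hc' hzN ?_ hvN hadj ((hU2 v hvN).1 hv2) ?_
        · intro h; exact hz2 ((hU2 z hzN).2 h)
        · rw [← hNN z v hzN hvN]; exact hvne
      have e3 : c' w u = c' w z := Reach_cw hwS hc' (by rwa [← hReq])
      rw [hcwz, e1, e3, e2, hNN z v hzN hvN]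
  funext u v
  by_cases hu : u = w
  · rw [hu]; exact hw v
  by_cases hv : v = w
  · rw [hv, hc.1 u w, hc'.1 u w]
    exact hw u
  · exact hcc' u v hu hv



variable (G S w) in
noncomputable def PairsP : Finset (Finset (Fin n) × Finset (Fin n)) :=
  ((NbrS G S w).powerset ×ˢ (NbrS G S w).powerset).filter
    (fun p => ∀ x ∈ p.1, ∀ y ∈ p.2, ¬ G.Adj x y ∧ x ≠ y)

include hwS in
lemma card_le_dense : NVC G S ≤ NVC G (S.erase w) * (PairsP G S w).card := by
  classical
  have hmem : ∀ c : {c : Fin n → Fin n → Fin 3 // OKc G S c},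
      (Xset G S w c.1, Yset G S w c.1) ∈ PairsP G S w := by
    intro c
    refine Finset.mem_filter.2 ⟨Finset.mem_product.2 ⟨?_, ?_⟩, ?_⟩
    · exact Finset.mem_powerset.2 (Finset.filter_subset _ _)
    · exact Finset.mem_powerset.2
        ((Finset.sdiff_subset).trans (Finset.filter_subset _ _))
    · intro x hx y hy
      exact crossfreeXY hwS c.2 hx hy
  have key : Nat.card {c : Fin n → Fin n → Fin 3 // OKc G S c} ≤
      Nat.card ({c : Fin n → Fin n → Fin 3 // OKc G (S.erase w) c} × ↥(PairsP G S w)) := by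
    apply Nat.card_le_card_of_injective
      (f := fun c => (⟨resC w c.1, resC_OK c.2⟩, ⟨(Xset G S w c.1, Yset G S w c.1), hmem c⟩))
    intro c c' h
    rw [Prod.mk.injEq, Subtype.mk.injEq, Subtype.mk.injEq, Prod.mk.injEq] at h
    exact Subtype.ext (dense_inj hwS c.2 c'.2 h.1 h.2.1 h.2.2)
  calc NVC G S ≤ _ := key
    _ = NVC G (S.erase w) * (PairsP G S w).card := by
        rw [Nat.card_prod, Nat.card_eq_finsetCard]
        rfl

variable (G S w) in
noncomputable def ASet (y : Fin n) : Finset (Fin n) :=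
  (NbrS G S w).filter (fun z => ¬ G.Adj y z ∧ y ≠ z)

lemma PairsP_card_le {U : ℕ} (hU : ∀ y ∈ NbrS G S w, (ASet G S w y).card ≤ U) :
    (PairsP G S w).card ≤
      2 ^ (NbrS G S w).card + 2 ^ (NbrS G S w).card +
        (NbrS G S w).card * (NbrS G S w).card * (2 ^ U * 2 ^ U) := by
  classical
  set N := NbrS G S w with hN
  set P := PairsP G S w with hP
  have hsplit : P.card ≤ (P.filter (fun p => p.1 = ∅)).card
      + ((P.filter (fun p => ¬ p.1 = ∅)).filter (fun p => p.2 = ∅)).card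
      + ((P.filter (fun p => ¬ p.1 = ∅)).filter (fun p => ¬ p.2 = ∅)).card := by
    rw [← Finset.card_filter_add_card_filter_not (s := P) (p := fun p => p.1 = ∅),
      ← Finset.card_filter_add_card_filter_not
        (s := P.filter (fun p => ¬ p.1 = ∅)) (p := fun p => p.2 = ∅)]
    omega
  have h1 : (P.filter (fun p => p.1 = ∅)).card ≤ 2 ^ N.card := by
    rw [← Finset.card_powerset]
    apply Finset.card_le_card_of_injOn (fun p => p.2)
    · intro p hp
      have := Finset.mem_filter.1 hp
      exact (Finset.mem_product.1 (Finset.mem_filter.1 this.1).1).2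
    · intro p hp q hq hpq
      have hp1 := (Finset.mem_filter.1 hp).2
      have hq1 := (Finset.mem_filter.1 hq).2
      exact Prod.ext (hp1.trans hq1.symm) hpq
  have h2 : ((P.filter (fun p => ¬ p.1 = ∅)).filter (fun p => p.2 = ∅)).card ≤ 2 ^ N.card := by
    rw [← Finset.card_powerset]
    apply Finset.card_le_card_of_injOn (fun p => p.1)
    · intro p hp
      have := (Finset.mem_filter.1 (Finset.mem_filter.1 hp).1).1
      exact (Finset.mem_product.1 (Finset.mem_filter.1 this).1).1
    · intro p hp q hq hpq
      have hp1 := (Finset.mem_filter.1 hp).2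
      have hq1 := (Finset.mem_filter.1 hq).2
      exact Prod.ext hpq (hp1.trans hq1.symm)
  have h3 : ((P.filter (fun p => ¬ p.1 = ∅)).filter (fun p => ¬ p.2 = ∅)).card ≤
      N.card * N.card * (2 ^ U * 2 ^ U) := by
    have hsub : (P.filter (fun p => ¬ p.1 = ∅)).filter (fun p => ¬ p.2 = ∅) ⊆
        (N ×ˢ N).biUnion (fun q => (ASet G S w q.2).powerset ×ˢ (ASet G S w q.1).powerset) := by
      intro p hp
      obtain ⟨hp', hY⟩ := Finset.mem_filter.1 hp
      obtain ⟨hpP, hX⟩ := Finset.mem_filter.1 hp'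
      obtain ⟨hprod, hcross⟩ := Finset.mem_filter.1 hpP
      obtain ⟨hXsub, hYsub⟩ := Finset.mem_product.1 hprod
      rw [Finset.mem_powerset] at hXsub hYsub
      have hXne : p.1.Nonempty := Finset.nonempty_of_ne_empty (by simpa using hX)
      have hYne : p.2.Nonempty := Finset.nonempty_of_ne_empty (by simpa using hY)
      set x0 := p.1.min' hXne
      set y0 := p.2.min' hYne
      have hx0 : x0 ∈ p.1 := Finset.min'_mem _ _
      have hy0 : y0 ∈ p.2 := Finset.min'_mem _ _
      apply Finset.mem_biUnion.2
      refine ⟨(x0, y0), Finset.mem_product.2 ⟨hXsub hx0, hYsub hy0⟩, ?_⟩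
      refine Finset.mem_product.2 ⟨Finset.mem_powerset.2 ?_, Finset.mem_powerset.2 ?_⟩
      · intro z hz
        obtain ⟨hna, hne⟩ := hcross z hz y0 hy0
        refine Finset.mem_filter.2 ⟨hXsub hz, fun h => hna h.symm, fun h => hne h.symm⟩
      · intro z hz
        obtain ⟨hna, hne⟩ := hcross x0 hx0 z hz
        exact Finset.mem_filter.2 ⟨hYsub hz, hna, hne⟩
    calc ((P.filter (fun p => ¬ p.1 = ∅)).filter (fun p => ¬ p.2 = ∅)).card
        ≤ ((N ×ˢ N).biUnion
            (fun q => (ASet G S w q.2).powerset ×ˢ (ASet G S w q.1).powerset)).card :=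
          Finset.card_le_card hsub
      _ ≤ ∑ q ∈ N ×ˢ N, ((ASet G S w q.2).powerset ×ˢ (ASet G S w q.1).powerset).card :=
          Finset.card_biUnion_le
      _ ≤ ∑ _q ∈ N ×ˢ N, 2 ^ U * 2 ^ U := by
          apply Finset.sum_le_sum
          intro q hq
          obtain ⟨hq1, hq2⟩ := Finset.mem_product.1 hq
          rw [Finset.card_product, Finset.card_powerset, Finset.card_powerset]
          exact Nat.mul_le_mul (Nat.pow_le_pow_right (by norm_num) (hU _ hq2))
            (Nat.pow_le_pow_right (by norm_num) (hU _ hq1))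
      _ = N.card * N.card * (2 ^ U * 2 ^ U) := by
          rw [Finset.sum_const, Finset.card_product, smul_eq_mul]
  omega

lemma ASet_card_le (hwS : w ∈ S)
    (hmin : ∀ y ∈ S, (NbrS G S w).card ≤ (NbrS G S y).card)
    {y : Fin n} (hy : y ∈ NbrS G S w) :
    (ASet G S w y).card + (NbrS G S w).card + 1 ≤ S.card := by
  classical
  set N := NbrS G S w with hNdef
  obtain ⟨hyw, hyS, hadjwy⟩ := mem_NbrS.1 hy
  have hwN : w ∉ N := by
    rw [hNdef]
    intro h
    exact (mem_NbrS.1 h).1 rfl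
  have hNS : N ⊆ S := fun z hz => (mem_NbrS.1 hz).2.1
  have hins : insert w N ⊆ S := by
    intro z hz
    rcases Finset.mem_insert.1 hz with h|h
    · rw [h]; exact hwS
    · exact hNS h
  set R := S \ insert w N with hRdef
  have hRcard : R.card + (N.card + 1) = S.card := by
    rw [hRdef, Finset.card_sdiff_of_subset hins, Finset.card_insert_of_notMem hwN]
    have hle : (insert w N).card ≤ S.card := Finset.card_le_card hins
    rw [Finset.card_insert_of_notMem hwN] at hle
    omega
  set Ny := NbrS G S y with hNydef
  have h1 : Ny.card ≤ (Ny ∩ N).card + (1 + R.card) := by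
    have hsub : Ny ⊆ (Ny ∩ N) ∪ insert w R := by
      intro z hz
      obtain ⟨hzy, hzS, hadjyz⟩ := mem_NbrS.1 hz
      by_cases hzN : z ∈ N
      · exact Finset.mem_union_left _ (Finset.mem_inter.2 ⟨hz, hzN⟩)
      by_cases hzw : z = w
      · exact Finset.mem_union_right _ (Finset.mem_insert.2 (Or.inl hzw))
      · refine Finset.mem_union_right _ (Finset.mem_insert.2 (Or.inr ?_))
        rw [hRdef]
        refine Finset.mem_sdiff.2 ⟨hzS, ?_⟩
        intro hmem
        rcases Finset.mem_insert.1 hmem with h|h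
        · exact hzw h
        · exact hzN h
    calc Ny.card ≤ ((Ny ∩ N) ∪ insert w R).card := Finset.card_le_card hsub
      _ ≤ (Ny ∩ N).card + (insert w R).card := Finset.card_union_le _ _
      _ ≤ (Ny ∩ N).card + (1 + R.card) := by
          have := Finset.card_insert_le w R
          omega
  have h2 : (ASet G S w y).card + (Ny ∩ N).card + 1 ≤ N.card := by
    have hdisj : Disjoint (ASet G S w y) (Ny ∩ N) := by
      rw [Finset.disjoint_left]
      intro z hzA hzI
      obtain ⟨hzN, hna, hne⟩ := Finset.mem_filter.1 hzA
      have := mem_NbrS.1 (Finset.mem_inter.1 hzI).1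
      exact hna this.2.2
    have hysub : insert y (ASet G S w y ∪ (Ny ∩ N)) ⊆ N := by
      intro z hz
      rcases Finset.mem_insert.1 hz with h|h
      · rw [h]; exact hy
      rcases Finset.mem_union.1 h with h|h
      · exact (Finset.mem_filter.1 h).1
      · exact (Finset.mem_inter.1 h).2
    have hynot : y ∉ ASet G S w y ∪ (Ny ∩ N) := by
      intro h
      rcases Finset.mem_union.1 h with h|h
      · exact (Finset.mem_filter.1 h).2.2 rfl
      · exact (mem_NbrS.1 (Finset.mem_inter.1 h).1).1 rfl
    have := Finset.card_le_card hysub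
    rw [Finset.card_insert_of_notMem hynot, Finset.card_union_of_disjoint hdisj] at this
    omega
  have h3 : N.card ≤ Ny.card := hmin y hyS
  omega

end Dense


lemma step_bound (G : SimpleGraph (Fin n)) (S : Finset (Fin n)) (hS : S.Nonempty) :
    ∃ w ∈ S, NVC G S ≤ (S.card ^ 2 + 2) * 2 ^ (S.erase w).card * NVC G (S.erase w) := by
  classical
  obtain ⟨w, hwS, hwmin⟩ := Finset.exists_min_image S (fun x => (NbrS G S x).card) hS
  refine ⟨w, hwS, ?_⟩
  have hde : (NbrS G S w).card ≤ (S.erase w).card :=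
    Finset.card_le_card (Finset.filter_subset _ _)
  set d := (NbrS G S w).card with hd
  set e := (S.erase w).card with he
  have hte : S.card = e + 1 := by
    rw [he, Finset.card_erase_of_mem hwS]
    have := Finset.card_pos.2 hS
    omega
  by_cases hcase : 8 * d ≤ 5 * e
  · -- sparse case
    have h3 : (3:ℕ) ^ d ≤ 2 ^ e := by
      have h8 : ((3:ℕ) ^ d) ^ 8 ≤ ((2:ℕ) ^ e) ^ 8 := by
        rw [← pow_mul, ← pow_mul]
        calc (3:ℕ) ^ (d * 8) ≤ 3 ^ (5 * e) := by
              apply Nat.pow_le_pow_right (by norm_num)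
              omega
          _ = (3 ^ 5) ^ e := by rw [← pow_mul]
          _ ≤ (2 ^ 8) ^ e := Nat.pow_le_pow_left (by norm_num) e
          _ = 2 ^ (e * 8) := by rw [← pow_mul]; ring_nf
      exact (Nat.pow_le_pow_iff_left (by norm_num)).1 h8
    calc NVC G S ≤ NVC G (S.erase w) * 3 ^ d := card_le_sparse
      _ ≤ NVC G (S.erase w) * 2 ^ e := Nat.mul_le_mul_left _ h3
      _ ≤ (S.card ^ 2 + 2) * 2 ^ e * NVC G (S.erase w) := by
          have h1 : (1:ℕ) ≤ S.card ^ 2 + 2 := by omega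
          calc NVC G (S.erase w) * 2 ^ e = 1 * 2 ^ e * NVC G (S.erase w) := by ring
            _ ≤ (S.card ^ 2 + 2) * 2 ^ e * NVC G (S.erase w) := by
                apply Nat.mul_le_mul_right
                apply Nat.mul_le_mul_right
                exact h1
  · -- dense case
    push_neg at hcase
    have hU : ∀ y ∈ NbrS G S w, (ASet G S w y).card ≤ e - d := by
      intro y hy
      have := ASet_card_le hwS hwmin hy
      omega
    have hP := PairsP_card_le (G := G) (S := S) (w := w) hU
    have h2U : 2 ^ (e - d) * 2 ^ (e - d) ≤ 2 ^ e := by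
      rw [← pow_add]
      apply Nat.pow_le_pow_right (by norm_num)
      omega
    have hPP : (PairsP G S w).card ≤ (S.card ^ 2 + 2) * 2 ^ e := by
      calc (PairsP G S w).card ≤ 2 ^ d + 2 ^ d + d * d * (2 ^ (e-d) * 2 ^ (e-d)) := hP
        _ ≤ 2 ^ e + 2 ^ e + d * d * 2 ^ e := by
            have hpow : (2:ℕ) ^ d ≤ 2 ^ e := Nat.pow_le_pow_right (by norm_num) hde
            have := Nat.mul_le_mul_left (d * d) h2U
            omega
        _ = (d * d + 2) * 2 ^ e := by ring
        _ ≤ (S.card ^ 2 + 2) * 2 ^ e := by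
            apply Nat.mul_le_mul_right
            have : d ≤ S.card := by omega
            have := Nat.mul_le_mul this this
            rw [pow_two]
            omega
    calc NVC G S ≤ NVC G (S.erase w) * (PairsP G S w).card := card_le_dense hwS
      _ ≤ NVC G (S.erase w) * ((S.card ^ 2 + 2) * 2 ^ e) := Nat.mul_le_mul_left _ hPP
      _ = (S.card ^ 2 + 2) * 2 ^ e * NVC G (S.erase w) := by ring

noncomputable def Bnd : ℕ → ℕ
  | 0 => 1
  | (m+1) => ((m+1) ^ 2 + 2) * 2 ^ m * Bnd m

lemma NVC_le_Bnd (G : SimpleGraph (Fin n)) (S : Finset (Fin n)) : NVC G S ≤ Bnd S.card := by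
  classical
  induction S using Finset.strongInduction with
  | _ S ih =>
    rcases S.eq_empty_or_nonempty with h|h
    · rw [h, NVC_empty]
      simp [Bnd]
    · obtain ⟨w, hwS, hstep⟩ := step_bound G S h
      have hss : S.erase w ⊂ S := Finset.erase_ssubset hwS
      have hcard : (S.erase w).card + 1 = S.card := by
        rw [Finset.card_erase_of_mem hwS]
        have := Finset.card_pos.2 h
        omega
      have hih := ih (S.erase w) hss
      calc NVC G S ≤ (S.card ^ 2 + 2) * 2 ^ (S.erase w).card * NVC G (S.erase w) := hstep
        _ ≤ (S.card ^ 2 + 2) * 2 ^ (S.erase w).card * Bnd (S.erase w).card :=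
            Nat.mul_le_mul_left _ hih
        _ = Bnd S.card := by
            rw [← hcard]
            rfl

lemma Bnd_le (m : ℕ) : Bnd m ≤ (m ^ 2 + 2) ^ m * 2 ^ (∑ i ∈ Finset.range m, i) := by
  induction m with
  | zero => simp [Bnd]
  | succ m ih =>
    rw [Finset.sum_range_succ]
    calc Bnd (m+1) = ((m+1) ^ 2 + 2) * 2 ^ m * Bnd m := rfl
      _ ≤ ((m+1) ^ 2 + 2) * 2 ^ m * ((m ^ 2 + 2) ^ m * 2 ^ (∑ i ∈ Finset.range m, i)) :=
          Nat.mul_le_mul_left _ ih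
      _ ≤ ((m+1) ^ 2 + 2) * 2 ^ m * (((m+1) ^ 2 + 2) ^ m * 2 ^ (∑ i ∈ Finset.range m, i)) := by
          apply Nat.mul_le_mul_left
          apply Nat.mul_le_mul_right
          apply Nat.pow_le_pow_left
          have : m ^ 2 ≤ (m+1) ^ 2 := Nat.pow_le_pow_left (by omega) 2
          omega
      _ = ((m+1) ^ 2 + 2) ^ (m+1) * 2 ^ (∑ i ∈ Finset.range m, i + m) := by
          rw [pow_succ, pow_add]
          ring


end Statement11Aux

section Bridge

open Statement11Aux

lemma colCount_le_NVC {n : ℕ} (G : SimpleGraph (Fin n)) :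
    colCount 3 rainbowPat G ≤ NVC G Finset.univ := by
  rw [colCount, NVC]
  have hok : ∀ c : Fin n → Fin n → Fin 3,
      IsEdgeColoring G c ∧ ¬ ContainsPattern G rainbowPat c → OKc G Finset.univ c := by
    rintro c ⟨⟨hsym, hpin⟩, hpat⟩
    refine ⟨hsym, ?_, ?_⟩
    · intro u v h
      have hna : ¬ G.Adj u v := by
        intro hadj
        exact h ⟨Finset.mem_univ u, Finset.mem_univ v, hadj⟩
      exact Fin.ext (hpin u v hna)
    · intro u v x _ _ _ hadj1 hadj2 hadj3
      by_contra hcon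
      push_neg at hcon
      obtain ⟨d1, d2, d3⟩ := hcon
      apply hpat
      have e1 : c v u = c u v := (hsym u v).symm
      have e2 : c x u = c u x := (hsym u x).symm
      have e3 : c x v = c v x := (hsym v x).symm
      have huv : u ≠ v := hadj1.ne
      have hux : u ≠ x := hadj2.ne
      have hvx : v ≠ x := hadj3.ne
      have s1 : G.Adj v u := hadj1.symm
      have s2 : G.Adj x u := hadj2.symm
      have s3 : G.Adj x v := hadj3.symm
      have d1' : c u x ≠ c u v := fun h => d1 h.symm
      have d2' : c v x ≠ c u v := fun h => d2 h.symm
      have d3' : c v x ≠ c u x := fun h => d3 h.symm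
      refine ⟨![u, v, x], fun i => Set.mem_univ _, ?_, ?_, ?_⟩
      · intro a b hab
        fin_cases a <;> fin_cases b <;> simp_all
      · intro i j hij
        fin_cases i <;> fin_cases j <;> simp_all
      · intro i j i' j' hij hij'
        fin_cases i <;> fin_cases j <;> fin_cases i' <;> fin_cases j' <;>
          simp_all [rainbowPat] <;> decide
  apply Nat.card_le_card_of_injective
    (f := fun c => (⟨c.1, hok c.1 c.2⟩ : {c : Fin n → Fin n → Fin 3 // OKc G Finset.univ c}))
  intro c c' h
  have h2 := congrArg Subtype.val h
  exact Subtype.ext h2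

lemma exists_n0 (r : ℝ) (hr : 1 < r) :
    ∃ n₀ : ℕ, ∀ n : ℕ, n > n₀ → ((n : ℝ) ^ 2 + 2) ≤ r ^ n := by
  have h := isLittleO_pow_const_const_pow_of_one_lt (R := ℝ) 2 hr
  rw [Asymptotics.isLittleO_iff] at h
  have h2 := h (c := (1:ℝ)/4) (by norm_num)
  have h3 : Filter.Tendsto (fun n : ℕ => r ^ n) Filter.atTop Filter.atTop :=
    tendsto_pow_atTop_atTop_of_one_lt hr
  have h4 := h3.eventually_ge_atTop 8
  obtain ⟨n₀, hn⟩ := Filter.eventually_atTop.1 (h2.and h4)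
  refine ⟨n₀, fun n hn' => ?_⟩
  obtain ⟨ha, hb⟩ := hn n (le_of_lt hn')
  have hrpos : (0:ℝ) < r ^ n := pow_pos (lt_trans one_pos hr) n
  have ha' : (n:ℝ) ^ 2 ≤ (1/4) * r ^ n := by
    have := ha
    rw [Real.norm_eq_abs, Real.norm_eq_abs, abs_of_nonneg (by positivity),
      abs_of_nonneg (le_of_lt hrpos)] at this
    exact this
  nlinarith

end Bridge




/-- For every `δ > 0` there is `n₀` such that every graph `G` on `n > n₀` vertices has at
most `2 ^ ((1+δ)n²/2)` 3-edge-colorings containing no rainbow triangle. -/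
theorem statement11 (δ : ℝ) (hδ : 0 < δ) :
    ∃ n₀ : ℕ, ∀ n : ℕ, n > n₀ → ∀ G : SimpleGraph (Fin n),
      (colCount 3 rainbowPat G : ℝ) ≤ (2 : ℝ) ^ ((1 + δ) * (n : ℝ) ^ 2 / 2) := by
  have hr : (1:ℝ) < (2:ℝ) ^ ((δ/2) : ℝ) := by
    rw [show (1:ℝ) = (2:ℝ) ^ (0:ℝ) by simp]
    exact (Real.rpow_lt_rpow_left_iff (by norm_num)).2 (by linarith)
  obtain ⟨n₀, hn₀⟩ := exists_n0 _ hr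
  refine ⟨n₀, fun n hn G => ?_⟩
  set r := (2:ℝ) ^ ((δ/2) : ℝ) with hrdef
  have hnat : colCount 3 rainbowPat G ≤
      (n^2+2)^n * 2^(∑ i ∈ Finset.range n, i) := by
    calc colCount 3 rainbowPat G ≤ Statement11Aux.NVC G Finset.univ := colCount_le_NVC G
      _ ≤ Statement11Aux.Bnd (Finset.univ : Finset (Fin n)).card :=
          Statement11Aux.NVC_le_Bnd G _
      _ = Statement11Aux.Bnd n := by rw [Finset.card_univ, Fintype.card_fin]
      _ ≤ _ := Statement11Aux.Bnd_le n
  set E := ∑ i ∈ Finset.range n, i with hE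
  have hE2 : 2 * E ≤ n * n := by
    have h1 := Finset.sum_range_id_mul_two n
    rw [← hE] at h1
    have h2 : n * (n-1) ≤ n * n := Nat.mul_le_mul_left n (by omega)
    omega
  have hcast : (colCount 3 rainbowPat G : ℝ) ≤ ((n:ℝ)^2+2)^n * (2:ℝ)^(E:ℕ) := by
    calc (colCount 3 rainbowPat G : ℝ) ≤ (((n^2+2)^n * 2^E : ℕ) : ℝ) := by
          exact_mod_cast hnat
      _ = ((n:ℝ)^2+2)^n * (2:ℝ)^(E:ℕ) := by push_cast; ring
  have hpoly : ((n:ℝ)^2+2) ≤ r ^ n := hn₀ n hn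
  have h1 : ((n:ℝ)^2+2)^n ≤ (r ^ n) ^ n := pow_le_pow_left₀ (by positivity) hpoly n
  have hEr : 2 * (E:ℝ) ≤ (n:ℝ) * n := by exact_mod_cast hE2
  calc (colCount 3 rainbowPat G : ℝ) ≤ ((n:ℝ)^2+2)^n * (2:ℝ)^(E:ℕ) := hcast
    _ ≤ (r^n)^n * (2:ℝ)^(E:ℕ) := mul_le_mul_of_nonneg_right h1 (by positivity)
    _ = (2:ℝ) ^ ((δ/2) * ((n:ℝ)*n) + (E:ℝ)) := by
        rw [Real.rpow_add (by norm_num : (0:ℝ) < 2)]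
        congr 1
        · rw [← pow_mul, hrdef, ← Real.rpow_natCast ((2:ℝ) ^ ((δ/2):ℝ)) (n*n),
            ← Real.rpow_mul (by norm_num : (0:ℝ) ≤ 2)]
          congr 1
          push_cast; ring
        · rw [← Real.rpow_natCast 2 E]
    _ ≤ (2:ℝ) ^ ((1 + δ) * (n:ℝ)^2 / 2) := by
        apply Real.rpow_le_rpow_of_exponent_le (by norm_num)
        have hsq : (n:ℝ)^2 = (n:ℝ)*n := by ring
        rw [hsq]
        linarith
end

section
/- Let t ≥ 2 and consider the complete graph K_{t+1} on vertices v₁, …, v_{t+1}. For every 3-edge-coloring of the complete graph on {v₁, …, v_t} containing no rainbow triangle, the number of ways to 3-color the t edges from v_{t+1} to {v₁, …, v_t} so that the resulting 3-edge-coloring of K_{t+1} still contains no rainbow triangle is at most t·2^t. -/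
open SimpleGraph

lemma copy {V : Type*} (C : V → V → Fin 3) (u v w : V)
    (huv : u ≠ v) (huw : u ≠ w) (hvw : v ≠ w)
    (s1 : C u v = C v u) (s2 : C u w = C w u) (s3 : C v w = C w v)
    (hxy : C u w ≠ C v w) (hxz : C u w ≠ C u v) (hyz : C v w ≠ C u v) :
    ContainsPattern (⊤ : SimpleGraph V) rainbowPat C := by
  refine ⟨![u, v, w], fun i => trivial, ?_, ?_, ?_⟩
  · intro a b hab
    fin_cases a <;> fin_cases b <;> simp_all <;> tauto
  · intro a b hab
    fin_cases a <;> fin_cases b <;> simp_all <;> tauto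
  · intro i j i' j' hij hij'
    fin_cases i <;> fin_cases j <;> fin_cases i' <;> fin_cases j' <;>
      simp_all [rainbowPat] <;> tauto

def Valid {n : ℕ} (c : Fin n → Fin n → Fin 3) (d : Fin n → Fin 3) : Prop :=
  ∀ i j, i ≠ j → d i = d j ∨ d i = c i j ∨ d j = c i j

lemma ext_lastCases {n : ℕ} {d₁ d₂ : Fin (n+1) → Fin 3}
    (h1 : ∀ j : Fin n, d₁ j.castSucc = d₂ j.castSucc) (h2 : d₁ (Fin.last n) = d₂ (Fin.last n)) :
    d₁ = d₂ := by
  funext k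
  induction k using Fin.lastCases with
  | last => exact h2
  | cast j => exact h1 j

lemma valid_count : ∀ (n : ℕ) (c : Fin n → Fin n → Fin 3),
    Nat.card {d : Fin n → Fin 3 // Valid c d} ≤ 2 ^ (n + 1) - 1 := by
  intro n
  induction n with
  | zero =>
    intro c
    have h := Nat.card_le_card_of_injective (fun x : {d : Fin 0 → Fin 3 // Valid c d} => x.1)
      Subtype.val_injective
    simpa using h
  | succ n ih =>
    intro c
    classical
    set c' : Fin n → Fin n → Fin 3 := fun i j => c i.castSucc j.castSucc with hc'
    set e : Fin n → Fin 3 := fun j => c j.castSucc (Fin.last n) with he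
    have hrestr : ∀ d : Fin (n+1) → Fin 3, Valid c d → Valid c' (d ∘ Fin.castSucc) := by
      intro d hd i j hij
      exact hd i.castSucc j.castSucc (by simpa [Fin.castSucc_inj] using hij)
    -- the injection
    have key : ∀ (d : Fin (n+1) → Fin 3), Valid c d → (d ∘ Fin.castSucc) ≠ e →
        ∃ j0 : Fin n, d j0.castSucc ≠ e j0 ∧
          (d (Fin.last n) = d j0.castSucc ∨ d (Fin.last n) = e j0) := by
      intro d hd hne
      have : ∃ j : Fin n, d j.castSucc ≠ e j := by
        by_contra h
        push_neg at h
        exact hne (funext h)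
      obtain ⟨j0, hj0⟩ := this
      refine ⟨j0, hj0, ?_⟩
      have := hd j0.castSucc (Fin.last n) (Fin.castSucc_lt_last j0).ne
      rcases this with h | h | h
      · exact Or.inl h.symm
      · exact absurd h hj0
      · exact Or.inr h
    have hmem : ∀ (d' : Fin n → Fin 3), d' ≠ e →
        (Finset.univ.filter (fun j => d' j ≠ e j)).Nonempty := by
      intro d' hne
      by_contra h
      rw [Finset.not_nonempty_iff_eq_empty, Finset.filter_eq_empty_iff] at h
      exact hne (funext fun j => not_not.mp (h (Finset.mem_univ j)))
    set j0 : ∀ (d' : Fin n → Fin 3), d' ≠ e → Fin n :=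
      fun d' hne => (Finset.univ.filter (fun j => d' j ≠ e j)).min' (hmem d' hne) with hj0def
    have hj0 : ∀ d' hne, d' (j0 d' hne) ≠ e (j0 d' hne) := by
      intro d' hne
      have := Finset.min'_mem _ (hmem d' hne)
      simpa using this
    set F : {d : Fin (n+1) → Fin 3 // Valid c d} →
        ({d' : Fin n → Fin 3 // Valid c' d'} × Fin 2) ⊕ Unit :=
      fun x =>
        if hne : (x.1 ∘ Fin.castSucc) = e then
          (if x.1 (Fin.last n) = 2 then Sum.inr () else
            Sum.inl (⟨x.1 ∘ Fin.castSucc, hrestr x.1 x.2⟩,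
              if x.1 (Fin.last n) = 0 then 0 else 1))
        else
          Sum.inl (⟨x.1 ∘ Fin.castSucc, hrestr x.1 x.2⟩,
            if x.1 (Fin.last n) = (x.1 ∘ Fin.castSucc) (j0 _ hne) then 0 else 1)
      with hF
    have fin3 : ∀ a b : Fin 3, a ≠ 0 → a ≠ 2 → b ≠ 0 → b ≠ 2 → a = b := by decide
    have hinj : Function.Injective F := by
      rintro ⟨d₁, h₁⟩ ⟨d₂, h₂⟩ heq
      simp only [hF] at heq
      have recover : ∀ (d : Fin (n+1) → Fin 3) (hd : Valid c d)
          (hne : (d ∘ Fin.castSucc) ≠ e),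
          d (Fin.last n) = (d ∘ Fin.castSucc) (j0 _ hne) ∨
          d (Fin.last n) = e (j0 _ hne) := by
        intro d hd hne
        obtain ⟨j, hj, hor⟩ := key d hd hne
        have := hd (j0 _ hne).castSucc (Fin.last n) (Fin.castSucc_lt_last _).ne
        rcases this with h | h | h
        · exact Or.inl h.symm
        · exact absurd h (hj0 _ hne)
        · exact Or.inr h
      by_cases hne₁ : (d₁ ∘ Fin.castSucc) = e <;> by_cases hne₂ : (d₂ ∘ Fin.castSucc) = e
      · rw [dif_pos hne₁, dif_pos hne₂] at heq
        have hfun : d₁ ∘ Fin.castSucc = d₂ ∘ Fin.castSucc := hne₁.trans hne₂.symm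
        by_cases h1 : d₁ (Fin.last n) = 2 <;> by_cases h2 : d₂ (Fin.last n) = 2
        · exact Subtype.ext (ext_lastCases (fun j => congrFun hfun j) (h1.trans h2.symm))
        · rw [if_pos h1, if_neg h2] at heq; simp at heq
        · rw [if_neg h1, if_pos h2] at heq; simp at heq
        · rw [if_neg h1, if_neg h2] at heq
          simp only [Sum.inl.injEq, Prod.mk.injEq] at heq
          have hbit := heq.2
          have hlast : d₁ (Fin.last n) = d₂ (Fin.last n) := by
            by_cases ha : d₁ (Fin.last n) = 0 <;> by_cases hb : d₂ (Fin.last n) = 0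
            · exact ha.trans hb.symm
            · rw [if_pos ha, if_neg hb] at hbit; simp at hbit
            · rw [if_neg ha, if_pos hb] at hbit; simp at hbit
            · exact fin3 _ _ ha h1 hb h2
          exact Subtype.ext (ext_lastCases (fun j => congrFun hfun j) hlast)
      · rw [dif_pos hne₁, dif_neg hne₂] at heq
        by_cases h1 : d₁ (Fin.last n) = 2
        · rw [if_pos h1] at heq; simp at heq
        · rw [if_neg h1] at heq
          simp only [Sum.inl.injEq, Prod.mk.injEq, Subtype.mk.injEq] at heq
          exact absurd (heq.1 ▸ hne₂) (fun h => h hne₁)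
      · rw [dif_neg hne₁, dif_pos hne₂] at heq
        by_cases h2 : d₂ (Fin.last n) = 2
        · rw [if_pos h2] at heq; simp at heq
        · rw [if_neg h2] at heq
          simp only [Sum.inl.injEq, Prod.mk.injEq, Subtype.mk.injEq] at heq
          exact absurd (heq.1 ▸ hne₁) (fun h => h hne₂)
      · rw [dif_neg hne₁, dif_neg hne₂] at heq
        simp only [Sum.inl.injEq, Prod.mk.injEq, Subtype.mk.injEq] at heq
        obtain ⟨hfun, hbit⟩ := heq
        have hj0eq : j0 _ hne₁ = j0 _ hne₂ := by
          simp only [hj0def]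
          congr 1
          ext j
          simp only [Finset.mem_filter, Finset.mem_univ, true_and]
          rw [congrFun hfun j]
        have hA : (d₂ ∘ Fin.castSucc) (j0 _ hne₂) = (d₁ ∘ Fin.castSucc) (j0 _ hne₁) :=
          (congrArg (d₂ ∘ Fin.castSucc) hj0eq.symm).trans (congrFun hfun _).symm
        have hB : e (j0 _ hne₂) = e (j0 _ hne₁) := by rw [hj0eq]
        have hlast : d₁ (Fin.last n) = d₂ (Fin.last n) := by
          rcases recover d₁ h₁ hne₁ with ha | ha <;> rcases recover d₂ h₂ hne₂ with hb | hb
          · rw [ha, hb, hA]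
          · rw [if_pos ha, if_neg (fun h => hj0 _ hne₂ (h.symm.trans hb))] at hbit
            simp at hbit
          · rw [if_neg (fun h => hj0 _ hne₁ (h.symm.trans ha)), if_pos hb] at hbit
            simp at hbit
          · rw [ha, hb, hB]
        exact Subtype.ext (ext_lastCases (fun j => congrFun hfun j) hlast)
    have hcard := Nat.card_le_card_of_injective F hinj
    have hco : Nat.card (({d' : Fin n → Fin 3 // Valid c' d'} × Fin 2) ⊕ Unit)
        = Nat.card {d' : Fin n → Fin 3 // Valid c' d'} * 2 + 1 := by
      simp [Nat.card_sum]
    rw [hco] at hcard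
    have hih := ih c'
    have hpow : (1:ℕ) ≤ 2 ^ (n + 1) := Nat.one_le_two_pow
    have : (2:ℕ) ^ (n + 1 + 1) = 2 ^ (n + 1) * 2 := by ring
    omega

/-- Let `t ≥ 2` and let `c0` be a 3-edge-coloring of the complete graph on `{v₁, …, v_t}`
with no rainbow triangle.  The number of ways to 3-color the `t` edges from a new vertex
`v_{t+1}` to `{v₁, …, v_t}` so that the resulting 3-edge-coloring of `K_{t+1}` still has no
rainbow triangle is at most `t · 2^t`. -/
theorem statement13 (t : ℕ) (ht : 2 ≤ t) (c0 : Fin t → Fin t → Fin 3)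
    (hsymm : ∀ i j, c0 i j = c0 j i)
    (hfree : ¬ ContainsPattern (⊤ : SimpleGraph (Fin t)) rainbowPat c0) :
    Nat.card {d : Fin t → Fin 3 //
      ¬ ContainsPattern (⊤ : SimpleGraph (Fin (t + 1))) rainbowPat
        (fun i j =>
          if hi : i = Fin.last t then
            (if hj : j = Fin.last t then 0 else d (j.castPred hj))
          else if hj : j = Fin.last t then d (i.castPred hi)
          else c0 (i.castPred hi) (j.castPred hj))} ≤ t * 2 ^ t := by
  classical
  set C : (Fin t → Fin 3) → Fin (t+1) → Fin (t+1) → Fin 3 := fun d i j =>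
    if hi : i = Fin.last t then
      (if hj : j = Fin.last t then 0 else d (j.castPred hj))
    else if hj : j = Fin.last t then d (i.castPred hi)
    else c0 (i.castPred hi) (j.castPred hj) with hC
  have hcsne : ∀ k : Fin t, k.castSucc ≠ Fin.last t := fun k => (Fin.castSucc_lt_last k).ne
  have hCe : ∀ (d : Fin t → Fin 3) (i j : Fin t),
      C d i.castSucc j.castSucc = c0 i j := by
    intro d i j
    simp [hC, dif_neg (hcsne i), dif_neg (hcsne j), Fin.castPred_castSucc]
  have hCl : ∀ (d : Fin t → Fin 3) (i : Fin t), C d i.castSucc (Fin.last t) = d i := by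
    intro d i
    simp [hC, dif_neg (hcsne i), Fin.castPred_castSucc]
  have hCl' : ∀ (d : Fin t → Fin 3) (i : Fin t), C d (Fin.last t) i.castSucc = d i := by
    intro d i
    simp [hC, dif_neg (hcsne i), Fin.castPred_castSucc]
  have stepA : ∀ d : Fin t → Fin 3,
      ¬ ContainsPattern (⊤ : SimpleGraph (Fin (t + 1))) rainbowPat (C d) → Valid c0 d := by
    intro d hcon i j hij
    by_contra hbad
    push_neg at hbad
    obtain ⟨h1, h2, h3⟩ := hbad
    apply hcon
    refine copy (C d) i.castSucc j.castSucc (Fin.last t)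
      (fun h => hij (Fin.castSucc_injective t h)) (hcsne i) (hcsne j) ?_ ?_ ?_ ?_ ?_ ?_
    · rw [hCe, hCe, hsymm]
    · rw [hCl, hCl']
    · rw [hCl, hCl']
    · rw [hCl, hCl]; exact h1
    · rw [hCl, hCe]; exact h2
    · rw [hCl, hCe]; exact h3
  have hinj : Function.Injective
      (fun x : {d : Fin t → Fin 3 //
          ¬ ContainsPattern (⊤ : SimpleGraph (Fin (t + 1))) rainbowPat (C d)} =>
        (⟨x.1, stepA x.1 x.2⟩ : {d : Fin t → Fin 3 // Valid c0 d})) := by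
    intro x y h
    simp only [Subtype.mk.injEq] at h
    exact Subtype.ext h
  have h1 := Nat.card_le_card_of_injective _ hinj
  have h2 := valid_count t c0
  have h3 : (2:ℕ) ^ (t + 1) - 1 ≤ t * 2 ^ t := by
    have h4 : (2:ℕ) ^ (t + 1) = 2 * 2 ^ t := by ring
    have h5 : 2 * 2 ^ t ≤ t * 2 ^ t := Nat.mul_le_mul_right _ ht
    omega
  exact le_trans h1 (le_trans h2 h3)
end

section
/- For every n ≥ 2, the number of 3-edge-colorings of the complete graph K_n containing no rainbow triangle satisfies c_{3,F̂₃}(K_n) ≤ 3·(n−1)!·2^{n(n−1)/2 − 1}. -/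
open SimpleGraph

def MyValid (m : ℕ) (χ : Fin m → Fin m → Fin 3) (f : Fin m → Fin 3) : Prop :=
  ∀ u v, u ≠ v → (f u = f v ∨ f u = χ u v ∨ f v = χ u v)

def MyGood (n : ℕ) (c : Fin n → Fin n → Fin 3) : Prop :=
  (∀ u v, c u v = c v u) ∧ (∀ u, c u u = 0) ∧
  ∀ u v w, u ≠ v → u ≠ w → v ≠ w →
    (c u v = c u w ∨ c u v = c v w ∨ c u w = c v w)

instance (m : ℕ) (χ : Fin m → Fin m → Fin 3) : DecidablePred (MyValid m χ) := fun _ => by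
  unfold MyValid; infer_instance

instance (n : ℕ) : DecidablePred (MyGood n) := fun _ => by
  unfold MyGood; infer_instance

lemma valid_card : ∀ (m : ℕ) (χ : Fin m → Fin m → Fin 3),
    (Finset.univ.filter (MyValid m χ)).card ≤ 2 ^ (m + 1) - 1 := by
  intro m
  induction m with
  | zero =>
    intro χ
    calc (Finset.univ.filter (MyValid 0 χ)).card
        ≤ (Finset.univ : Finset (Fin 0 → Fin 3)).card := Finset.card_filter_le _ _
      _ ≤ 2 ^ 1 - 1 := by simp
  | succ m ih =>
    intro χ
    set χ' : Fin m → Fin m → Fin 3 := fun u v => χ u.castSucc v.castSucc with hχ'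
    set g₀ : Fin m → Fin 3 := fun u => χ u.castSucc (Fin.last m) with hg₀
    have hmap : ∀ f ∈ Finset.univ.filter (MyValid (m+1) χ),
        (fun u => f (Fin.castSucc u)) ∈ Finset.univ.filter (MyValid m χ') := by
      intro f hf
      simp only [Finset.mem_filter, Finset.mem_univ, true_and] at hf ⊢
      intro u v huv
      exact hf u.castSucc v.castSucc (by simpa [Fin.castSucc_inj] using huv)
    rw [Finset.card_eq_sum_card_fiberwise hmap]
    have hfib : ∀ f' ∈ Finset.univ.filter (MyValid m χ'),
        ((Finset.univ.filter (MyValid (m+1) χ)).filter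
          (fun f => (fun u => f (Fin.castSucc u)) = f')).card
          ≤ 2 + (if f' = g₀ then 1 else 0) := by
      intro f' _
      by_cases hsp : f' = g₀
      · rw [if_pos hsp]
        have h3 : ((Finset.univ.filter (MyValid (m+1) χ)).filter
            (fun f => (fun u => f (Fin.castSucc u)) = f')).card
            ≤ (Finset.univ : Finset (Fin 3)).card := by
          apply Finset.card_le_card_of_injOn (fun f => f (Fin.last m))
            (fun f _ => Finset.mem_univ _)
          intro f hf g hg h
          simp only [Finset.coe_filter, Set.mem_setOf_eq, Finset.mem_filter,
            Finset.mem_univ, true_and] at hf hg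
          funext x
          cases x using Fin.lastCases with
          | last => exact h
          | cast i =>
            have h1 : f i.castSucc = f' i := congrFun hf.2 i
            have h2 : g i.castSucc = f' i := congrFun hg.2 i
            rw [h1, h2]
        simpa using h3
      · rw [if_neg hsp]
        obtain ⟨u₀, hu₀⟩ := Function.ne_iff.mp hsp
        have h3 : ((Finset.univ.filter (MyValid (m+1) χ)).filter
            (fun f => (fun u => f (Fin.castSucc u)) = f')).card
            ≤ ({f' u₀, g₀ u₀} : Finset (Fin 3)).card := by
          apply Finset.card_le_card_of_injOn (fun f => f (Fin.last m))
          · intro f hf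
            replace hf : f ∈ (Finset.univ.filter (MyValid (m+1) χ)).filter
              (fun f => (fun u => f (Fin.castSucc u)) = f') := hf
            simp only [Finset.mem_filter, Finset.mem_univ, true_and] at hf
            have hrest : f u₀.castSucc = f' u₀ := congrFun hf.2 u₀
            have hv := hf.1 u₀.castSucc (Fin.last m) (Fin.castSucc_lt_last u₀).ne
            simp only [Finset.mem_coe, Finset.mem_insert, Finset.mem_singleton]
            rcases hv with h | h | h
            · exact Or.inl (hrest ▸ h.symm)
            · exact absurd (hrest ▸ h) hu₀
            · exact Or.inr h
          · intro f hf g hg h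
            simp only [Finset.coe_filter, Set.mem_setOf_eq, Finset.mem_filter,
              Finset.mem_univ, true_and] at hf hg
            funext x
            cases x using Fin.lastCases with
            | last => exact h
            | cast i =>
              have h1 : f i.castSucc = f' i := congrFun hf.2 i
              have h2 : g i.castSucc = f' i := congrFun hg.2 i
              rw [h1, h2]
        calc _ ≤ ({f' u₀, g₀ u₀} : Finset (Fin 3)).card := h3
          _ ≤ 2 := Finset.card_insert_le _ _ |>.trans (by simp)
    calc ∑ f' ∈ Finset.univ.filter (MyValid m χ'),
          ((Finset.univ.filter (MyValid (m+1) χ)).filter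
            (fun f => (fun u => f (Fin.castSucc u)) = f')).card
        ≤ ∑ f' ∈ Finset.univ.filter (MyValid m χ'), (2 + (if f' = g₀ then 1 else 0)) :=
          Finset.sum_le_sum hfib
      _ = 2 * (Finset.univ.filter (MyValid m χ')).card
            + ∑ f' ∈ Finset.univ.filter (MyValid m χ'), (if f' = g₀ then 1 else 0) := by
          rw [Finset.sum_add_distrib, Finset.sum_const, smul_eq_mul, mul_comm]
      _ ≤ 2 * (2 ^ (m + 1) - 1) + 1 := by
          have h4 := ih χ'
          have h5 : ∑ f' ∈ Finset.univ.filter (MyValid m χ'), (if f' = g₀ then 1 else 0)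
              ≤ 1 := by
            rw [Finset.sum_ite_eq']
            split <;> omega
          omega
      _ ≤ 2 ^ (m + 1 + 1) - 1 := by
          have h6 : (1:ℕ) ≤ 2 ^ (m + 1) := Nat.one_le_two_pow
          have h7 : (2:ℕ) ^ (m + 1 + 1) = 2 * 2 ^ (m + 1) := by ring
          omega

lemma good_succ (n : ℕ) :
    (Finset.univ.filter (MyGood (n+1))).card
      ≤ (Finset.univ.filter (MyGood n)).card * (2 ^ (n + 1) - 1) := by
  have hmap : ∀ c ∈ Finset.univ.filter (MyGood (n+1)),
      (fun u v => c (Fin.castSucc u) (Fin.castSucc v)) ∈ Finset.univ.filter (MyGood n) := by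
    intro c hc
    simp only [Finset.mem_filter, Finset.mem_univ, true_and] at hc ⊢
    obtain ⟨hs, hd, hr⟩ := hc
    refine ⟨fun u v => hs _ _, fun u => hd _, fun u v w huv huw hvw => ?_⟩
    exact hr _ _ _ (by simpa [Fin.castSucc_inj] using huv)
      (by simpa [Fin.castSucc_inj] using huw) (by simpa [Fin.castSucc_inj] using hvw)
  rw [Finset.card_eq_sum_card_fiberwise hmap]
  have hfib : ∀ c' ∈ Finset.univ.filter (MyGood n),
      ((Finset.univ.filter (MyGood (n+1))).filter
        (fun c => (fun u v => c (Fin.castSucc u) (Fin.castSucc v)) = c')).card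
        ≤ 2 ^ (n + 1) - 1 := by
    intro c' _
    have h3 : ((Finset.univ.filter (MyGood (n+1))).filter
        (fun c => (fun u v => c (Fin.castSucc u) (Fin.castSucc v)) = c')).card
        ≤ (Finset.univ.filter (MyValid n c')).card := by
      apply Finset.card_le_card_of_injOn (fun c => fun u => c (Fin.castSucc u) (Fin.last n))
      · intro c hc
        replace hc : c ∈ (Finset.univ.filter (MyGood (n+1))).filter
          (fun c => (fun u v => c (Fin.castSucc u) (Fin.castSucc v)) = c') := hc
        simp only [Finset.mem_coe, Finset.mem_filter, Finset.mem_univ, true_and] at hc ⊢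
        obtain ⟨⟨hs, hd, hr⟩, hrest⟩ := hc
        intro u v huv
        have h4 := hr u.castSucc v.castSucc (Fin.last n)
          (by simpa [Fin.castSucc_inj] using huv)
          (Fin.castSucc_lt_last u).ne (Fin.castSucc_lt_last v).ne
        have h5 : c u.castSucc v.castSucc = c' u v := by
          rw [← hrest]
        rcases h4 with h | h | h
        · exact Or.inr (Or.inl (h5 ▸ h.symm))
        · exact Or.inr (Or.inr (h5 ▸ h.symm))
        · exact Or.inl h
      · intro c hc d hd h
        simp only [Finset.coe_filter, Set.mem_setOf_eq, Finset.mem_filter,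
          Finset.mem_univ, true_and] at hc hd
        funext u v
        cases u using Fin.lastCases with
        | last =>
          cases v using Fin.lastCases with
          | last => rw [hc.1.2.1, hd.1.2.1]
          | cast j =>
            have h1 : c (Fin.last n) j.castSucc = c j.castSucc (Fin.last n) := hc.1.1 _ _
            have h2 : d (Fin.last n) j.castSucc = d j.castSucc (Fin.last n) := hd.1.1 _ _
            rw [h1, h2]
            exact congrFun h j
        | cast i =>
          cases v using Fin.lastCases with
          | last => exact congrFun h i
          | cast j =>
            have h1 : c i.castSucc j.castSucc = c' i j := by rw [← hc.2]
            have h2 : d i.castSucc j.castSucc = c' i j := by rw [← hd.2]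
            rw [h1, h2]
    exact h3.trans (valid_card n c')
  calc ∑ c' ∈ Finset.univ.filter (MyGood n),
        ((Finset.univ.filter (MyGood (n+1))).filter
          (fun c => (fun u v => c (Fin.castSucc u) (Fin.castSucc v)) = c')).card
      ≤ ∑ _c' ∈ Finset.univ.filter (MyGood n), (2 ^ (n + 1) - 1) :=
        Finset.sum_le_sum hfib
    _ = (Finset.univ.filter (MyGood n)).card * (2 ^ (n + 1) - 1) := by
        rw [Finset.sum_const, smul_eq_mul]

lemma good_one : (Finset.univ.filter (MyGood 1)).card ≤ 1 := by
  apply Finset.card_le_one.mpr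
  intro a ha b hb
  simp only [Finset.mem_filter, Finset.mem_univ, true_and] at ha hb
  funext u v
  have hu : u = 0 := Subsingleton.elim _ _
  have hv : v = 0 := Subsingleton.elim _ _
  subst hu; subst hv
  rw [ha.2.1 0, hb.2.1 0]

lemma good_bound : ∀ n : ℕ, 2 ≤ n →
    (Finset.univ.filter (MyGood n)).card
      ≤ 3 * Nat.factorial (n - 1) * 2 ^ (n * (n - 1) / 2 - 1) := by
  intro n hn
  induction n, hn using Nat.le_induction with
  | base =>
    have h1 := good_succ 1
    have h2 := good_one
    norm_num [Nat.factorial]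
    calc (Finset.univ.filter (MyGood 2)).card ≤ _ := h1
      _ ≤ 1 * (2 ^ 2 - 1) := by
          exact Nat.mul_le_mul_right _ h2
      _ ≤ 3 := by norm_num
  | succ n hn ih =>
    obtain ⟨a, rfl⟩ : ∃ a, n = a + 2 := ⟨n - 2, by omega⟩
    -- even product
    obtain ⟨j, hj0⟩ := Nat.even_mul_succ_self (a + 1)
    have hj : (a + 1) * (a + 2) = j + j := by
      rw [show a + 2 = a + 1 + 1 by omega]; exact hj0
    have hj1 : 1 ≤ j := by nlinarith
    have e2 : (a + 2) - 1 = a + 1 := by omega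
    have e3 : (a + 2 + 1) - 1 = a + 2 := by omega
    rw [e2] at ih
    rw [e3]
    have hprod2 : (a + 2) * (a + 1) = 2 * j := by rw [mul_comm]; omega
    have hprod3 : (a + 2 + 1) * (a + 2) = 2 * (j + a + 2) := by
      calc (a + 2 + 1) * (a + 2) = (a + 1) * (a + 2) + 2 * (a + 2) := by ring
        _ = 2 * (j + a + 2) := by omega
    have ediv2 : (a + 2) * (a + 1) / 2 = j := by rw [hprod2]; omega
    have ediv3 : (a + 2 + 1) * (a + 2) / 2 = j + a + 2 := by rw [hprod3]; omega
    rw [ediv2] at ih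
    rw [ediv3]
    have hle : 2 ^ (a + 2 + 1) - 1 ≤ (a + 2) * 2 ^ (a + 2) := by
      have h1 : (2:ℕ) ^ (a + 2 + 1) = 2 * 2 ^ (a + 2) := by ring
      have h2 : 2 * 2 ^ (a + 2) ≤ (a + 2) * 2 ^ (a + 2) :=
        Nat.mul_le_mul_right _ (by omega)
      omega
    calc (Finset.univ.filter (MyGood (a + 2 + 1))).card
        ≤ (Finset.univ.filter (MyGood (a + 2))).card * (2 ^ (a + 2 + 1) - 1) :=
          good_succ (a + 2)
      _ ≤ 3 * Nat.factorial (a + 1) * 2 ^ (j - 1) * ((a + 2) * 2 ^ (a + 2)) :=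
          Nat.mul_le_mul ih hle
      _ = 3 * ((a + 2) * Nat.factorial (a + 1)) * (2 ^ (j - 1) * 2 ^ (a + 2)) := by ring
      _ = 3 * Nat.factorial (a + 2) * 2 ^ (j + a + 2 - 1) := by
          rw [← Nat.factorial_succ, ← pow_add]
          congr 2
          omega

lemma good_of (n : ℕ) (c : Fin n → Fin n → Fin 3)
    (h : IsEdgeColoring (⊤ : SimpleGraph (Fin n)) c ∧
      ¬ ContainsPattern (⊤ : SimpleGraph (Fin n)) rainbowPat c) : MyGood n c := by
  obtain ⟨⟨hs, hd⟩, hnc⟩ := h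
  refine ⟨hs, ?_, ?_⟩
  · intro u
    have h1 := hd u u (by simp)
    exact Fin.ext (by simpa using h1)
  · intro u v w huv huw hvw
    by_contra hcon
    push_neg at hcon
    obtain ⟨h1, h2, h3⟩ := hcon
    have h1' := h1.symm
    have h2' := h2.symm
    have h3' := h3.symm
    apply hnc
    have hinj : Function.Injective (![u, v, w]) := by
      intro i j hij
      fin_cases i <;> fin_cases j <;> simp_all
    refine ⟨![u, v, w], fun i => Set.mem_univ _, hinj, ?_, ?_⟩
    · intro i j hij
      simp only [top_adj]
      exact fun hc => hij (hinj hc)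
    · intro i j i' j' hij hij'
      have s1 : c v u = c u v := (hs u v).symm
      have s2 : c w u = c u w := (hs u w).symm
      have s3 : c w v = c v w := (hs v w).symm
      fin_cases i <;> fin_cases j <;> fin_cases i' <;> fin_cases j' <;>
        simp_all [rainbowPat]


/-- For every `n ≥ 2`, the number of 3-edge-colorings of `K_n` with no rainbow triangle is
at most `3 · (n-1)! · 2 ^ (n(n-1)/2 - 1)`. -/
theorem statement14 (n : ℕ) (hn : 2 ≤ n) :
    colCount 3 rainbowPat (⊤ : SimpleGraph (Fin n)) ≤
      3 * Nat.factorial (n - 1) * 2 ^ (n * (n - 1) / 2 - 1) := by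
  have h1 : colCount 3 rainbowPat (⊤ : SimpleGraph (Fin n))
      ≤ (Finset.univ.filter (MyGood n)).card := by
    unfold colCount
    have hinj : Function.Injective
        (fun x : {c : Fin n → Fin n → Fin 3 //
            IsEdgeColoring (⊤ : SimpleGraph (Fin n)) c ∧
            ¬ ContainsPattern (⊤ : SimpleGraph (Fin n)) rainbowPat c} =>
          (⟨x.1, good_of n x.1 x.2⟩ : {c : Fin n → Fin n → Fin 3 // MyGood n c})) := by
      intro a b h
      simpa [Subtype.ext_iff] using h
    calc Nat.card {c : Fin n → Fin n → Fin 3 //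
          IsEdgeColoring (⊤ : SimpleGraph (Fin n)) c ∧
          ¬ ContainsPattern (⊤ : SimpleGraph (Fin n)) rainbowPat c}
        ≤ Nat.card {c : Fin n → Fin n → Fin 3 // MyGood n c} :=
          Nat.card_le_card_of_injective _ hinj
      _ = (Finset.univ.filter (MyGood n)).card := by
          rw [Nat.card_eq_fintype_card, Fintype.card_subtype]
  exact h1.trans (good_bound n hn)
end

section
/- Let k ≥ 3 and let H be a (k−1)-partite graph on t vertices with vertex partition W = W₁ ∪ ⋯ ∪ W_{k−1}. If, for some m ≥ (k−1)², the graph H has at least ex(t, K_k) − m edges, then for every i ∈ {1, …, k−1} we have | |W_i| − t/(k−1) | ≤ √( (2(k−2)/(k−1))·m + 2(k−2) ) < √(2m). -/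
open SimpleGraph

/-- The Turán number `ex(n, K_k)`: the maximum number of edges of a `K_k`-free graph on `n`
vertices. -/
noncomputable def exNum (n k : ℕ) : ℕ :=
  sSup {m | ∃ H : SimpleGraph (Fin n), H.CliqueFree k ∧ H.edgeSet.ncard = m}

open Finset in
lemma aux_sum_comp {t q : ℕ} (f : Fin t → Fin q) (c : Fin q → ℕ) :
    ∑ v, c (f v) = ∑ j, (univ.filter fun v => f v = j).card * c j := by
  rw [← Finset.sum_fiberwise' univ f c]
  exact Finset.sum_congr rfl fun j _ => by rw [Finset.sum_const, smul_eq_mul]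

open Finset in
/-- In a graph with a proper colouring `f`, twice the edges plus the fiber squares is `≤ t²`. -/
lemma aux_key {t q : ℕ} (G : SimpleGraph (Fin t)) (f : Fin t → Fin q)
    (hf : ∀ u v, G.Adj u v → f u ≠ f v) :
    2 * G.edgeSet.ncard + ∑ i, ((univ.filter fun v => f v = i).card) ^ 2 ≤ t ^ 2 := by
  classical
  have hE : G.edgeSet.ncard = G.edgeFinset.card := by
    rw [← Set.ncard_coe_finset, SimpleGraph.coe_edgeFinset]
  have hdeg : ∀ v, G.degree v + (univ.filter fun u => f u = f v).card ≤ t := by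
    intro v
    have hdisj : Disjoint (G.neighborFinset v) (univ.filter fun u => f u = f v) := by
      rw [Finset.disjoint_left]
      intro u hu hu'
      rw [SimpleGraph.mem_neighborFinset] at hu
      rw [Finset.mem_filter] at hu'
      exact hf v u hu hu'.2.symm
    calc G.degree v + (univ.filter fun u => f u = f v).card
        = (G.neighborFinset v ∪ univ.filter fun u => f u = f v).card :=
          (Finset.card_union_of_disjoint hdisj).symm
      _ ≤ (univ : Finset (Fin t)).card := Finset.card_le_card (Finset.subset_univ _)
      _ = t := by simp
  have hsum : ∑ v, (G.degree v + (univ.filter fun u => f u = f v).card) ≤ ∑ _v : Fin t, t :=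
    Finset.sum_le_sum fun v _ => hdeg v
  rw [Finset.sum_add_distrib, SimpleGraph.sum_degrees_eq_twice_card_edges] at hsum
  have hfib : ∑ v, (univ.filter fun u => f u = f v).card
      = ∑ i, ((univ.filter fun v => f v = i).card) ^ 2 := by
    rw [aux_sum_comp f (fun j => (univ.filter fun u => f u = j).card)]
    exact Finset.sum_congr rfl fun j _ => (pow_two _).symm
  rw [hfib, Finset.sum_const, Finset.card_univ, Fintype.card_fin, smul_eq_mul,
    ← pow_two] at hsum
  rw [hE]
  exact hsum

open Finset in
/-- For the complete multipartite graph we have equality. -/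
lemma aux_key_eq {t q : ℕ} (f : Fin t → Fin q) :
    2 * ((⊤ : SimpleGraph (Fin q)).comap f).edgeSet.ncard
      + ∑ i, ((univ.filter fun v => f v = i).card) ^ 2 = t ^ 2 := by
  classical
  set G := (⊤ : SimpleGraph (Fin q)).comap f with hG
  have hE : G.edgeSet.ncard = G.edgeFinset.card := by
    rw [← Set.ncard_coe_finset, SimpleGraph.coe_edgeFinset]
  have hdeg : ∀ v, G.degree v + (univ.filter fun u => f u = f v).card = t := by
    intro v
    have h1 : G.degree v = (univ.filter fun u => ¬ f u = f v).card := by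
      rw [SimpleGraph.degree, SimpleGraph.neighborFinset_eq_filter]
      congr 1
      apply Finset.filter_congr
      intro u _
      show f v ≠ f u ↔ ¬ f u = f v
      exact ne_comm
    rw [h1, add_comm]
    rw [Finset.card_filter_add_card_filter_not (fun u => f u = f v)]
    simp
  have hsum : ∑ v, (G.degree v + (univ.filter fun u => f u = f v).card) = ∑ _v : Fin t, t :=
    Finset.sum_congr rfl fun v _ => hdeg v
  rw [Finset.sum_add_distrib, SimpleGraph.sum_degrees_eq_twice_card_edges] at hsum
  have hfib : ∑ v, (univ.filter fun u => f u = f v).card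
      = ∑ i, ((univ.filter fun v => f v = i).card) ^ 2 := by
    rw [aux_sum_comp f (fun j => (univ.filter fun u => f u = j).card)]
    exact Finset.sum_congr rfl fun j _ => (pow_two _).symm
  rw [hfib, Finset.sum_const, Finset.card_univ, Fintype.card_fin, smul_eq_mul,
    ← pow_two] at hsum
  rw [hE]
  exact hsum

lemma aux_exNum_ge {t k : ℕ} (G : SimpleGraph (Fin t)) (hG : G.CliqueFree k) :
    G.edgeSet.ncard ≤ exNum t k := by
  apply le_csSup
  · refine ⟨(Set.univ : Set (Sym2 (Fin t))).ncard, ?_⟩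
    rintro x ⟨G', _, rfl⟩
    exact Set.ncard_le_ncard (Set.subset_univ _) Set.finite_univ
  · exact ⟨G, hG, rfl⟩

open Finset in
/-- Fiber count of the mod-`q` colouring on `range t`. -/
lemma aux_count {t q : ℕ} (hq : 0 < q) (i : ℕ) (hi : i < q) :
    ((Finset.range t).filter fun v => v % q = i).card = (t + (q - 1 - i)) / q := by
  set c := q - 1 - i with hc
  rw [show ((t + c) / q) = (Finset.range ((t + c) / q)).card by simp]
  apply Finset.card_bij' (fun v _ => v / q) (fun j _ => i + q * j)
  · intro v hv
    rw [Finset.mem_filter, Finset.mem_range] at hv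
    rw [Finset.mem_range]
    have hv2 : q * (v / q) + i = v := by
      conv_rhs => rw [← Nat.div_add_mod v q]
      rw [hv.2]
    rw [Nat.lt_iff_add_one_le, Nat.le_div_iff_mul_le hq]
    have hexp : (v / q + 1) * q = q * (v / q) + q := by ring
    rw [hexp]
    generalize q * (v / q) = x at hv2 ⊢
    omega
  · intro j hj
    rw [Finset.mem_range] at hj
    rw [Finset.mem_filter, Finset.mem_range]
    have hj2 : (j + 1) * q ≤ t + c := (Nat.le_div_iff_mul_le hq).mp hj
    have hexp : (j + 1) * q = q * j + q := by ring
    rw [hexp] at hj2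
    constructor
    · generalize q * j = x at hj2 ⊢
      omega
    · rw [Nat.add_mul_mod_self_left, Nat.mod_eq_of_lt hi]
  · intro v hv
    rw [Finset.mem_filter, Finset.mem_range] at hv
    have hv2 : q * (v / q) + i = v := by
      conv_rhs => rw [← Nat.div_add_mod v q]
      rw [hv.2]
    omega
  · intro j _
    rw [Nat.add_mul_div_left _ _ hq, Nat.div_eq_of_lt hi, Nat.zero_add]

open Finset in
lemma aux_fin_count {t q : ℕ} (hq : 0 < q) (i : ℕ) (hi : i < q) :
    ((univ : Finset (Fin t)).filter fun (v : Fin t) => (v : ℕ) % q = i).card = (t + (q - 1 - i)) / q := by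
  rw [← aux_count (t := t) hq i hi]
  apply Finset.card_bij (fun (v : Fin t) _ => (v : ℕ))
  · intro v hv
    rw [Finset.mem_filter] at hv
    rw [Finset.mem_filter, Finset.mem_range]
    exact ⟨v.isLt, hv.2⟩
  · intro v _ w _ h
    exact Fin.val_injective h
  · intro w hw
    rw [Finset.mem_filter, Finset.mem_range] at hw
    exact ⟨⟨w, hw.1⟩, by rw [Finset.mem_filter]; exact ⟨Finset.mem_univ _, hw.2⟩, rfl⟩

lemma aux_b_bound {t q : ℕ} (hq : 0 < q) (b c : ℕ) (hc : c ≤ q - 1)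
    (hb : b = (t + c) / q) : ((b : ℝ) - (t : ℝ) / (q : ℝ)) ^ 2 ≤ 1 := by
  have h1 : q * b ≤ t + c := by
    rw [hb, mul_comm]; exact Nat.div_mul_le_self _ _
  have h2 : t + c < q * b + q := by
    have hdm := Nat.div_add_mod (t + c) q
    have hlt : (t + c) % q < q := Nat.mod_lt _ hq
    rw [hb]
    generalize q * ((t + c) / q) = x at hdm ⊢
    omega
  have hq0 : (0 : ℝ) < (q : ℝ) := by exact_mod_cast hq
  have hr1 : (q : ℝ) * b ≤ (t : ℝ) + ((q : ℝ) - 1) := by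
    have hcr : (c : ℝ) ≤ (q : ℝ) - 1 := by
      have h : (c : ℝ) ≤ ((q - 1 : ℕ) : ℝ) := by exact_mod_cast hc
      rwa [Nat.cast_sub hq, Nat.cast_one] at h
    have h : (q : ℝ) * b ≤ (t : ℝ) + c := by exact_mod_cast h1
    linarith
  have hr2 : (t : ℝ) < (q : ℝ) * b + q := by
    have h : (t : ℝ) + c < (q : ℝ) * b + q := by exact_mod_cast h2
    have hc0 : (0 : ℝ) ≤ (c : ℝ) := Nat.cast_nonneg _
    linarith
  have key : ((q : ℝ) * b - t) ^ 2 ≤ (q : ℝ) ^ 2 := by nlinarith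
  have heq : (b : ℝ) - (t : ℝ) / q = ((q : ℝ) * b - t) / q := by
    field_simp
  rw [heq, div_pow, div_le_one (by positivity)]
  exact key

open Finset in
lemma aux_dev {q : ℕ} (hq : 0 < q) (c : Fin q → ℕ) (T : ℝ) (hsum : ∑ i, (c i : ℝ) = T) :
    ∑ i, ((c i : ℝ) - T / q) ^ 2 = ∑ i, (c i : ℝ) ^ 2 - T ^ 2 / q := by
  have hq0 : (q : ℝ) ≠ 0 := by positivity
  calc ∑ i, ((c i : ℝ) - T / q) ^ 2
      = ∑ i, ((c i : ℝ) ^ 2 - 2 * (T / (q : ℝ)) * (c i : ℝ) + (T / (q : ℝ)) ^ 2) :=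
        Finset.sum_congr rfl fun i _ => by ring
    _ = (∑ i, (c i : ℝ) ^ 2) - 2 * (T / (q : ℝ)) * (∑ i, (c i : ℝ)) + (q : ℝ) * (T / q) ^ 2 := by
        rw [Finset.sum_add_distrib, Finset.sum_sub_distrib, ← Finset.mul_sum,
          Finset.sum_const, Finset.card_univ, Fintype.card_fin, nsmul_eq_mul]
    _ = ∑ i, (c i : ℝ) ^ 2 - T ^ 2 / q := by rw [hsum]; field_simp; ring

set_option maxHeartbeats 1000000 in
/-- Let `k ≥ 3` and let `H` be a `(k-1)`-partite graph on `t` vertices with partition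
`W₁ ∪ ⋯ ∪ W_{k-1}` (the fibers of a map `W`).  If for some `m ≥ (k-1)²` the graph `H` has
at least `ex(t, K_k) - m` edges, then every part satisfies
`| |Wᵢ| - t/(k-1) | ≤ √((2(k-2)/(k-1))·m + 2(k-2)) < √(2m)`. -/
theorem statement18 (k t m : ℕ) (hk : 3 ≤ k)
    (H : SimpleGraph (Fin t)) (W : Fin t → Fin (k - 1))
    (hpart : ∀ u v, H.Adj u v → W u ≠ W v)
    (hm : (k - 1) ^ 2 ≤ m)
    (hedges : (exNum t k : ℝ) - (m : ℝ) ≤ (H.edgeSet.ncard : ℝ)) :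
    ∀ i : Fin (k - 1),
      |({v | W v = i}.ncard : ℝ) - (t : ℝ) / ((k : ℝ) - 1)| ≤
        Real.sqrt (2 * ((k : ℝ) - 2) / ((k : ℝ) - 1) * (m : ℝ) + 2 * ((k : ℝ) - 2)) ∧
      Real.sqrt (2 * ((k : ℝ) - 2) / ((k : ℝ) - 1) * (m : ℝ) + 2 * ((k : ℝ) - 2)) <
        Real.sqrt (2 * (m : ℝ)) := by
  classical
  intro i
  have hq1 : 0 < k - 1 := by omega
  set Q : ℝ := ((k - 1 : ℕ) : ℝ) with hQdef
  have hQ : Q = (k : ℝ) - 1 := by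
    rw [hQdef, Nat.cast_sub (by omega : 1 ≤ k), Nat.cast_one]
  have hQ2 : (2 : ℝ) ≤ Q := by
    rw [hQdef]; exact_mod_cast (by omega : 2 ≤ k - 1)
  have hQ0 : (0 : ℝ) < Q := by linarith
  have hQne : Q ≠ 0 := ne_of_gt hQ0
  set R : ℝ := 2 * ((k : ℝ) - 2) / ((k : ℝ) - 1) * (m : ℝ) + 2 * ((k : ℝ) - 2) with hRdef
  have hk2 : (k : ℝ) - 2 = Q - 1 := by rw [hQ]; ring
  set a : Fin (k - 1) → ℕ := fun j => (Finset.univ.filter fun v => W v = j).card with haS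
  have ha : ∀ j, a j = (Finset.univ.filter fun v => W v = j).card := fun _ => rfl
  set g : Fin t → Fin (k - 1) := fun v => ⟨(v : ℕ) % (k - 1), Nat.mod_lt _ hq1⟩ with hgS
  have hg : ∀ v, g v = ⟨(v : ℕ) % (k - 1), Nat.mod_lt _ hq1⟩ := fun _ => rfl
  set b : Fin (k - 1) → ℕ := fun j => (Finset.univ.filter fun v => g v = j).card with hbS
  have hb : ∀ j, b j = (Finset.univ.filter fun v => g v = j).card := fun _ => rfl
  set G : SimpleGraph (Fin t) := (⊤ : SimpleGraph (Fin (k - 1))).comap g with hGdef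
  have hGfree : G.CliqueFree k := by
    have hcol : G.Colorable (k - 1) := ⟨SimpleGraph.Coloring.mk g (fun h => h)⟩
    exact hcol.cliqueFree (by omega)
  have hEx : G.edgeSet.ncard ≤ exNum t k := aux_exNum_ge G hGfree
  -- the fiber sizes of g are balanced
  have hbB : ∀ j : Fin (k - 1), ((b j : ℝ) - (t : ℝ) / Q) ^ 2 ≤ 1 := by
    intro j
    have hcount : b j = (t + (k - 1 - 1 - (j : ℕ))) / (k - 1) := by
      rw [hb j, ← aux_fin_count (t := t) hq1 (j : ℕ) j.isLt]
      congr 1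
      apply Finset.filter_congr
      intro v _
      simp only [hg v, Fin.ext_iff]
    exact aux_b_bound hq1 _ _ (by omega) hcount
  -- edge counts
  have hA : 2 * H.edgeSet.ncard + ∑ j, a j ^ 2 ≤ t ^ 2 := aux_key H W hpart
  have hB : 2 * G.edgeSet.ncard + ∑ j, b j ^ 2 = t ^ 2 := aux_key_eq g
  -- sums of fiber sizes
  have hsa : ∑ j, (a j : ℝ) = (t : ℝ) := by
    have h := Finset.card_eq_sum_card_fiberwise
      (s := (Finset.univ : Finset (Fin t))) (t := Finset.univ) (f := W)
      (fun x _ => Finset.mem_univ _)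
    simp only [Finset.card_univ, Fintype.card_fin] at h
    have h2 : ∑ j, a j = t := h.symm
    exact_mod_cast h2
  have hsb : ∑ j, (b j : ℝ) = (t : ℝ) := by
    have h := Finset.card_eq_sum_card_fiberwise
      (s := (Finset.univ : Finset (Fin t))) (t := Finset.univ) (f := g)
      (fun x _ => Finset.mem_univ _)
    simp only [Finset.card_univ, Fintype.card_fin] at h
    have h2 : ∑ j, b j = t := h.symm
    exact_mod_cast h2
  -- main chain
  have hchain : ∑ j, (a j : ℝ) ^ 2 ≤ ∑ j, (b j : ℝ) ^ 2 + 2 * m := by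
    have h1 : (2 : ℝ) * H.edgeSet.ncard + ∑ j, (a j : ℝ) ^ 2 ≤ (t : ℝ) ^ 2 := by
      exact_mod_cast hA
    have h2 : (2 : ℝ) * G.edgeSet.ncard + ∑ j, (b j : ℝ) ^ 2 = (t : ℝ) ^ 2 := by
      exact_mod_cast hB
    have h4 : (G.edgeSet.ncard : ℝ) ≤ (exNum t k : ℝ) := by exact_mod_cast hEx
    linarith
  -- deviation identities
  have hdevA := aux_dev hq1 a (t : ℝ) hsa
  have hdevB := aux_dev hq1 b (t : ℝ) hsb
  rw [← hQdef] at hdevA hdevB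
  have hsumB : ∑ j, ((b j : ℝ) - (t : ℝ) / Q) ^ 2 ≤ Q := by
    calc ∑ j, ((b j : ℝ) - (t : ℝ) / Q) ^ 2 ≤ ∑ _j : Fin (k - 1), (1 : ℝ) :=
          Finset.sum_le_sum fun j _ => hbB j
      _ = Q := by
          rw [Finset.sum_const, Finset.card_univ, Fintype.card_fin, nsmul_eq_mul, mul_one,
            ← hQdef]
  have hS : ∑ j, ((a j : ℝ) - (t : ℝ) / Q) ^ 2 ≤ Q + 2 * m := by linarith
  have hzero : ∑ j, ((a j : ℝ) - (t : ℝ) / Q) = 0 := by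
    rw [Finset.sum_sub_distrib, hsa, Finset.sum_const, Finset.card_univ, Fintype.card_fin,
      nsmul_eq_mul, ← hQdef]
    field_simp
    ring
  set d : Fin (k - 1) → ℝ := fun j => (a j : ℝ) - (t : ℝ) / Q with hdS
  have hcs : Q * d i ^ 2 ≤ (Q - 1) * ∑ j, d j ^ 2 := by
    have h1 : d i + ∑ j ∈ Finset.univ.erase i, d j = ∑ j, d j :=
      Finset.add_sum_erase _ d (Finset.mem_univ i)
    have h2 : (∑ j ∈ Finset.univ.erase i, d j) ^ 2
        ≤ ((Finset.univ.erase i).card : ℝ) * ∑ j ∈ Finset.univ.erase i, d j ^ 2 :=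
      sq_sum_le_card_mul_sum_sq
    have h3 : ((Finset.univ.erase i).card : ℝ) = Q - 1 := by
      rw [Finset.card_erase_of_mem (Finset.mem_univ i), Finset.card_univ, Fintype.card_fin,
        Nat.cast_sub (by omega : 1 ≤ k - 1), Nat.cast_one, ← hQdef]
    have h4 : (∑ j ∈ Finset.univ.erase i, d j) = - d i := by
      rw [hzero] at h1; linarith
    have h5 : ∑ j ∈ Finset.univ.erase i, d j ^ 2 = (∑ j, d j ^ 2) - d i ^ 2 := by
      have h6 := Finset.add_sum_erase Finset.univ (fun j => d j ^ 2) (Finset.mem_univ i)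
      linarith
    rw [h4, h3, h5] at h2
    nlinarith [h2]
  have hQR : Q * R = 2 * (Q - 1) * m + 2 * (Q - 1) * Q := by
    rw [hRdef, hk2, ← hQ]
    field_simp
  have hdi : d i ^ 2 ≤ R := by
    have h6 : Q * d i ^ 2 ≤ Q * R := by
      have h7 : (Q - 1) * (∑ j, d j ^ 2) ≤ (Q - 1) * (Q + 2 * m) :=
        mul_le_mul_of_nonneg_left hS (by linarith)
      calc Q * d i ^ 2 ≤ (Q - 1) * ∑ j, d j ^ 2 := hcs
        _ ≤ (Q - 1) * (Q + 2 * m) := h7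
        _ ≤ 2 * (Q - 1) * m + 2 * (Q - 1) * Q := by
            nlinarith [mul_nonneg (by linarith : (0:ℝ) ≤ Q - 1) (by linarith : (0:ℝ) ≤ Q)]
        _ = Q * R := hQR.symm
    exact le_of_mul_le_mul_left h6 hQ0
  have hR0 : (0 : ℝ) ≤ R := le_trans (sq_nonneg _) hdi
  constructor
  · have hnc : ({v | W v = i} : Set (Fin t)).ncard = a i := by
      rw [ha i, ← Set.ncard_coe_finset]
      congr 1
      ext v
      simp
    rw [hnc, ← hQ]
    show |d i| ≤ Real.sqrt R
    calc |d i| = Real.sqrt (d i ^ 2) := (Real.sqrt_sq_eq_abs _).symm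
      _ ≤ Real.sqrt R := Real.sqrt_le_sqrt hdi
  · apply Real.sqrt_lt_sqrt hR0
    have hmQ : Q ^ 2 ≤ (m : ℝ) := by
      rw [hQdef]; exact_mod_cast hm
    have h8 : Q * R < Q * (2 * m) := by
      rw [hQR]; nlinarith
    exact lt_of_mul_lt_mul_left h8 (le_of_lt hQ0)
end
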